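/- arXiv:1105.0258 — 4 statements merged into one kernel-verified Lean document; each statement's English description precedes it below -/
import Mathlib

section
/- Let N ≥ 2 and 1 ≤ n ≤ N+1. For all points p_1,…,p_n in general position in P^N, the radical ideal I = ∩_{j=1}^n m_{p_j} ⊆ k[P^N] of the n points satisfies I^(Nr) ⊆ M^{(N-1)r}·I^r for all integers r ≥ 1. -/
open MvPolynomial Filter

/-- The homogeneous ideal of all forms vanishing at the (projective) point with
coordinate vector `p`. -/
noncomputable def pointIdeal {k : Type*} [Field k] {σ : Type*} (p : σ → k) :
    Ideal (MvPolynomial σ k) :=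
  Ideal.span { f | (∃ d, f.IsHomogeneous d) ∧ eval p f = 0 }

/-- The fat points ideal `⋂ⱼ m_{pⱼ}^{mⱼ}` (natural multiplicities). -/
noncomputable def fatIdeal {k : Type*} [Field k] {N n : ℕ} (p : Fin n → (Fin (N + 1) → k))
    (m : Fin n → ℕ) : Ideal (MvPolynomial (Fin (N + 1)) k) :=
  ⨅ j, pointIdeal (p j) ^ (m j)

/-- The fat points ideal with integer multiplicities, with the convention
`m_p^m = (1)` for `m ≤ 0`. -/
noncomputable def fatIdealZ {k : Type*} [Field k] {N n : ℕ} (p : Fin n → (Fin (N + 1) → k))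
    (m : Fin n → ℤ) : Ideal (MvPolynomial (Fin (N + 1)) k) :=
  ⨅ j, pointIdeal (p j) ^ (m j).toNat

/-- The irrelevant maximal ideal `M = (x_0, …, x_N)`. -/
noncomputable def maxIdeal (k : Type*) [Field k] (N : ℕ) : Ideal (MvPolynomial (Fin (N + 1)) k) :=
  Ideal.span (Set.range X)

/-- `α(I)`: the least `t ≥ 0` such that `I` contains a nonzero form of degree `t`. -/
noncomputable def alpha {k : Type*} [Field k] {σ : Type*}
    (I : Ideal (MvPolynomial σ k)) : ℕ :=
  sInf { t | ∃ f ∈ I, f ≠ 0 ∧ f.IsHomogeneous t }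

/-- The sequence `t ↦ α(I^{(t)})/t` attached to the fat points ideal with points `p`
and multiplicities `m`; its limit as `t → ∞` is the Waldschmidt constant `γ`. -/
noncomputable def alphaSeq {k : Type*} [Field k] {N n : ℕ}
    (p : Fin n → (Fin (N + 1) → k)) (m : Fin n → ℕ) (t : ℕ) : ℝ :=
  (alpha (fatIdeal p fun j => t * m j) : ℝ) / t

/-- `P` holds for `n`-tuples of points of `P^N` in general position: there is a
nonempty Zariski-open subset (the complement of the zero locus of a set `S` of
polynomials in the coordinates of the tuple) of tuples of nonzero coordinate
vectors on which `P` holds. -/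
def Generic (k : Type*) [Field k] (N n : ℕ)
    (P : (Fin n → (Fin (N + 1) → k)) → Prop) : Prop :=
  ∃ S : Set (MvPolynomial (Fin n × Fin (N + 1)) k),
    (∃ p : Fin n → (Fin (N + 1) → k), (∀ j, p j ≠ 0) ∧
      ∃ f ∈ S, eval (fun q => p q.1 q.2) f ≠ 0) ∧
    ∀ p : Fin n → (Fin (N + 1) → k), (∀ j, p j ≠ 0) →
      (∃ f ∈ S, eval (fun q => p q.1 q.2) f ≠ 0) → P p

namespace SPAux

open Finset

variable {k : Type*} [Field k] {N : ℕ}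

/-- total degree of an exponent vector -/
def mdeg {N : ℕ} (a : Fin (N + 1) →₀ ℕ) : ℕ := ∑ i, a i

lemma mdeg_add (a b : Fin (N + 1) →₀ ℕ) : mdeg (a + b) = mdeg a + mdeg b := by
  simp [mdeg, Finset.sum_add_distrib]

lemma mdeg_single (i : Fin (N + 1)) (m : ℕ) : mdeg (Finsupp.single i m) = m := by
  simp [mdeg, Finsupp.single_apply]

lemma degree_eq_mdeg (a : Fin (N + 1) →₀ ℕ) : a.degree = mdeg a :=
  Finset.sum_subset (Finset.subset_univ _) (fun _ _ hi => Finsupp.notMem_support_iff.1 hi)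

lemma X_eq (i : Fin (N + 1)) : (X i : MvPolynomial (Fin (N + 1)) k) = monomial (Finsupp.single i 1) 1 := rfl

/-- The monomial ideal of monomials of weight at least `m` on the set `T`. -/
noncomputable def wtIdeal (k : Type*) [Field k] {N : ℕ} (T : Finset (Fin (N + 1))) (m : ℕ) :
    Ideal (MvPolynomial (Fin (N + 1)) k) :=
  Ideal.span ((fun s => monomial s (1 : k)) '' {a | m ≤ ∑ i ∈ T, a i})

lemma mem_wtIdeal {T : Finset (Fin (N + 1))} {m : ℕ} {f : MvPolynomial (Fin (N + 1)) k} :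
    f ∈ wtIdeal k T m ↔ ∀ a ∈ f.support, m ≤ ∑ i ∈ T, a i := by
  rw [wtIdeal, mem_ideal_span_monomial_image]
  constructor
  · intro h a ha
    obtain ⟨s, hs, hsa⟩ := h a ha
    exact hs.trans (Finset.sum_le_sum fun i _ => Finsupp.le_def.1 hsa i)
  · exact fun h a ha => ⟨a, h a ha, le_rfl⟩

lemma monomial_mem_wtIdeal {T : Finset (Fin (N + 1))} {m : ℕ} {a : Fin (N + 1) →₀ ℕ}
    (h : m ≤ ∑ i ∈ T, a i) : (monomial a (1 : k)) ∈ wtIdeal k T m :=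
  Ideal.subset_span ⟨a, h, rfl⟩

lemma wtIdeal_mul {T : Finset (Fin (N + 1))} {m m' : ℕ} :
    wtIdeal k T m * wtIdeal k T m' ≤ wtIdeal k T (m + m') := by
  classical
  rw [Ideal.mul_le]
  intro f hf g hg
  rw [mem_wtIdeal] at hf hg ⊢
  intro a ha
  have := MvPolynomial.support_mul f g ha
  rw [Finset.mem_add] at this
  obtain ⟨b, hb, c, hc, rfl⟩ := this
  have : (∑ i ∈ T, b i) + (∑ i ∈ T, c i) ≤ ∑ i ∈ T, (b + c) i := by
    rw [← Finset.sum_add_distrib]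
    exact le_of_eq (Finset.sum_congr rfl fun i _ => rfl)
  exact le_trans (Nat.add_le_add (hf b hb) (hg c hc)) this

lemma wtIdeal_pow_le {T : Finset (Fin (N + 1))} (m : ℕ) :
    wtIdeal k T 1 ^ m ≤ wtIdeal k T m := by
  induction m with
  | zero =>
    rw [pow_zero]
    intro f _
    rw [mem_wtIdeal]
    exact fun a _ => Nat.zero_le _
  | succ m ih =>
    rw [pow_succ]
    exact le_trans (Ideal.mul_mono ih le_rfl) wtIdeal_mul

lemma X_mem_wtIdeal {T : Finset (Fin (N + 1))} {i : Fin (N + 1)} (h : i ∈ T) :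
    (X i : MvPolynomial (Fin (N + 1)) k) ∈ wtIdeal k T 1 := by
  rw [X_eq]
  apply monomial_mem_wtIdeal
  have := Finset.single_le_sum (f := fun l => (Finsupp.single i 1 : Fin (N+1) →₀ ℕ) l)
    (fun _ _ => Nat.zero_le _) h
  simpa using this

lemma XX_mem_wtIdeal {T : Finset (Fin (N + 1))} {i i' : Fin (N + 1)} (h : i ∈ T ∨ i' ∈ T) :
    (X i * X i' : MvPolynomial (Fin (N + 1)) k) ∈ wtIdeal k T 1 := by
  rw [X_eq, X_eq, monomial_mul, one_mul]
  apply monomial_mem_wtIdeal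
  rcases h with h | h
  · have h1 := Finset.single_le_sum (f := fun l => ((Finsupp.single i 1 + Finsupp.single i' 1 : Fin (N+1) →₀ ℕ)) l)
      (fun _ _ => Nat.zero_le _) h
    have h2 : (1:ℕ) ≤ (Finsupp.single i 1 + Finsupp.single i' 1 : Fin (N+1) →₀ ℕ) i := by
      simp [Finsupp.add_apply]
    exact le_trans h2 h1
  · have h1 := Finset.single_le_sum (f := fun l => ((Finsupp.single i 1 + Finsupp.single i' 1 : Fin (N+1) →₀ ℕ)) l)
      (fun _ _ => Nat.zero_le _) h
    have h2 : (1:ℕ) ≤ (Finsupp.single i 1 + Finsupp.single i' 1 : Fin (N+1) →₀ ℕ) i' := by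
      simp [Finsupp.add_apply]
    exact le_trans h2 h1

/-- coordinate point ideals are monomial ideals -/
lemma pointIdeal_single (i0 : Fin (N + 1)) :
    pointIdeal (Pi.single i0 (1 : k)) = wtIdeal k (Finset.univ.erase i0) 1 := by
  classical
  apply le_antisymm
  · rw [pointIdeal]
    apply Ideal.span_le.2
    rintro f ⟨⟨d, hd⟩, hev⟩
    rw [SetLike.mem_coe, mem_wtIdeal]
    intro a ha
    by_contra hcon
    push_neg at hcon
    have hz : ∀ i, i ≠ i0 → a i = 0 := by
      intro i hi
      have h1 : a i ≤ ∑ l ∈ Finset.univ.erase i0, a l :=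
        Finset.single_le_sum (f := fun l => a l) (fun _ _ => Nat.zero_le _)
          (Finset.mem_erase.2 ⟨hi, Finset.mem_univ i⟩)
      omega
    have key : eval (Pi.single i0 (1:k)) f = coeff a f := by
      rw [eval_eq]
      rw [Finset.sum_eq_single a]
      · have h1 : ∀ i ∈ a.support, (Pi.single i0 (1:k) : Fin (N+1) → k) i ^ a i = 1 := by
          intro i hi
          have : i = i0 := by
            by_contra h
            exact (Finsupp.mem_support_iff.1 hi) (hz i h)
          subst this
          simp
        rw [Finset.prod_congr rfl h1]
        simp
      · intro b hb hne
        have hex : ∃ i ∈ b.support, i ≠ i0 := by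
          by_contra hc
          push_neg at hc
          have hsub : b = Finsupp.single i0 (b i0) :=
            Finsupp.support_subset_singleton.1 (fun i hi => Finset.mem_singleton.2 (hc i hi))
          have ha' : a = Finsupp.single i0 (a i0) :=
            Finsupp.support_subset_singleton.1 (fun i hi => by
              by_contra hmem
              exact (Finsupp.mem_support_iff.1 hi) (hz i (fun h => hmem (by rw [h]; exact Finset.mem_singleton_self _))))
          have hdb : b.degree = d := by
            by_contra h
            exact (Finsupp.mem_support_iff.1 hb) (hd.coeff_eq_zero h)
          have hda : a.degree = d := by
            by_contra h
            exact (Finsupp.mem_support_iff.1 ha) (hd.coeff_eq_zero h)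
          apply hne
          rw [hsub, ha']
          congr 1
          have e1 : b.degree = b i0 := by rw [hsub]; simp [degree_eq_mdeg, mdeg_single]
          have e2 : a.degree = a i0 := by rw [ha']; simp [degree_eq_mdeg, mdeg_single]
          omega
        obtain ⟨i, hi, hine⟩ := hex
        apply mul_eq_zero_of_right
        apply Finset.prod_eq_zero hi
        rw [Pi.single_eq_of_ne hine]
        exact zero_pow (Finsupp.mem_support_iff.1 hi)
      · intro h
        exact absurd ha h
    rw [key] at hev
    exact (Finsupp.mem_support_iff.1 ha) hev
  · rw [wtIdeal]
    apply Ideal.span_le.2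
    rintro g ⟨a, hmem, rfl⟩
    apply Ideal.subset_span
    refine ⟨⟨a.degree, isHomogeneous_monomial _ rfl⟩, ?_⟩
    obtain ⟨i, hiT, hine0⟩ : ∃ i ∈ Finset.univ.erase i0, a i ≠ 0 := by
      by_contra hc
      push_neg at hc
      have h0 : ∑ i ∈ Finset.univ.erase i0, a i = 0 := Finset.sum_eq_zero hc
      have hmem' : 1 ≤ ∑ i ∈ Finset.univ.erase i0, a i := hmem
      omega
    rw [eval_monomial]
    have hzero : a.prod (fun i e => (Pi.single i0 (1:k) : Fin (N+1) → k) i ^ e) = 0 := by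
      rw [Finsupp.prod]
      apply Finset.prod_eq_zero (Finsupp.mem_support_iff.2 hine0)
      rw [Pi.single_eq_of_ne (Finset.mem_erase.1 hiT).1]
      exact zero_pow hine0
    rw [hzero, mul_zero]

/-! ### Combinatorial construction -/

lemma split_single {i : Fin (N + 1)} {a : Fin (N + 1) →₀ ℕ} (h : a i ≠ 0) :
    a = Finsupp.single i 1 + (a - Finsupp.single i 1) := by
  ext l
  simp only [Finsupp.add_apply, Finsupp.tsub_apply]
  rcases eq_or_ne l i with rfl | hne
  · rw [Finsupp.single_eq_same]
    omega
  · rw [Finsupp.single_eq_of_ne' (fun hh => hne hh.symm)]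
    omega

lemma exists_pos_of_mdeg_pos {a : Fin (N + 1) →₀ ℕ} (h : mdeg a ≠ 0) : ∃ i, a i ≠ 0 := by
  by_contra hc
  push_neg at hc
  exact h (Finset.sum_eq_zero fun i _ => hc i)

lemma monomial_mem_pow_of_X_mem (I : Ideal (MvPolynomial (Fin (N + 1)) k)) :
    ∀ (r : ℕ) (b : Fin (N + 1) →₀ ℕ), (∀ i, b i ≠ 0 → (X i : MvPolynomial (Fin (N+1)) k) ∈ I) →
      mdeg b = r → (monomial b (1 : k)) ∈ I ^ r := by
  intro r
  induction r with
  | zero =>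
    intro b _ hdeg
    have hb0 : b = 0 := by
      ext i
      have h2 : ∑ i, b i = 0 := hdeg
      simpa using Finset.sum_eq_zero_iff.1 h2 i (Finset.mem_univ i)
    subst hb0
    rw [pow_zero, Ideal.one_eq_top]
    exact Submodule.mem_top
  | succ r ih =>
    intro b hX hdeg
    obtain ⟨i, hi⟩ := exists_pos_of_mdeg_pos (by omega : mdeg b ≠ 0)
    have hsplit := split_single hi
    set b' := b - Finsupp.single i 1 with hb'
    have hdeg' : mdeg b' = r := by
      have := congrArg mdeg hsplit
      rw [mdeg_add, mdeg_single] at this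
      omega
    have hmem' : (monomial b' (1:k)) ∈ I ^ r := by
      apply ih b' _ hdeg'
      intro l hl
      apply hX l
      have : b' l ≤ b l := by
        rw [hb', Finsupp.tsub_apply]
        omega
      omega
    have hb2 : b' + Finsupp.single i 1 = b := by
      ext l
      have h1 : b' l = b l - (Finsupp.single i 1) l := by rw [hb', Finsupp.tsub_apply]
      simp only [Finsupp.add_apply]
      rcases eq_or_ne l i with rfl | hne
      · rw [Finsupp.single_eq_same] at h1 ⊢
        omega
      · rw [Finsupp.single_eq_of_ne' (fun hh => hne hh.symm)] at h1 ⊢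
        omega
    have : (monomial b (1:k)) = monomial b' 1 * X i := by
      rw [X_eq, monomial_mul, mul_one]
      exact (congrArg (fun t => (monomial t (1:k))) hb2).symm
    rw [this, pow_succ]
    exact Ideal.mul_mem_mul hmem' (hX i hi)

lemma pairing (I : Ideal (MvPolynomial (Fin (N + 1)) k))
    (hpair : ∀ i i' : Fin (N + 1), i ≠ i' → (X i * X i' : MvPolynomial (Fin (N+1)) k) ∈ I) :
    ∀ (m : ℕ) (h : Fin (N + 1) →₀ ℕ), 2 * m ≤ mdeg h → (∀ i, m + h i ≤ mdeg h) →
      ∃ p, p ≤ h ∧ mdeg p = 2 * m ∧ (monomial p (1 : k)) ∈ I ^ m := by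
  intro m
  induction m with
  | zero =>
    intro h _ _
    refine ⟨0, zero_le, by simp [mdeg], ?_⟩
    rw [pow_zero, Ideal.one_eq_top]
    exact Submodule.mem_top
  | succ m ih =>
    intro h h1 h2
    obtain ⟨i, -, hmax⟩ := Finset.exists_max_image Finset.univ (fun l => h l) ⟨0, Finset.mem_univ _⟩
    obtain ⟨i', hi'mem, hi'pos⟩ : ∃ l ∈ Finset.univ.erase i, h l ≠ 0 := by
      by_contra hc
      push_neg at hc
      have h0 : ∑ l ∈ Finset.univ.erase i, h l = 0 := Finset.sum_eq_zero hc
      have hto : h i + ∑ l ∈ Finset.univ.erase i, h l = ∑ l, h l :=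
        Finset.add_sum_erase Finset.univ (fun l => h l) (Finset.mem_univ i)
      have hmd : mdeg h = ∑ l, h l := rfl
      have h2i := h2 i
      omega
    have hii' : i' ≠ i := (Finset.mem_erase.1 hi'mem).1
    have hipos : h i ≠ 0 := by
      have := hmax i' (Finset.mem_univ _)
      omega
    -- remove one from i and one from i'
    set h' := h - Finsupp.single i 1 - Finsupp.single i' 1 with hh'
    have happ : ∀ l, h' l = h l - (Finsupp.single i 1) l - (Finsupp.single i' 1) l := by
      intro l
      rw [hh', Finsupp.tsub_apply, Finsupp.tsub_apply]
    have hsplit : h = h' + Finsupp.single i 1 + Finsupp.single i' 1 := by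
      ext l
      simp only [Finsupp.add_apply]
      have hl := happ l
      rcases eq_or_ne l i with rfl | hne
      · rw [Finsupp.single_eq_same, Finsupp.single_eq_of_ne' hii'] at hl ⊢
        omega
      · rcases eq_or_ne l i' with rfl | hne'
        · rw [Finsupp.single_eq_same, Finsupp.single_eq_of_ne' (fun hh => hne hh.symm)] at hl ⊢
          omega
        · rw [Finsupp.single_eq_of_ne' (fun hh => hne hh.symm),
            Finsupp.single_eq_of_ne' (fun hh => hne' hh.symm)] at hl ⊢
          omega
    have hdeg' : mdeg h = mdeg h' + 2 := by
      have := congrArg mdeg hsplit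
      rw [mdeg_add, mdeg_add, mdeg_single, mdeg_single] at this
      omega
    have c1 : 2 * m ≤ mdeg h' := by omega
    have c2 : ∀ l, m + h' l ≤ mdeg h' := by
      intro l
      have hl := happ l
      rcases eq_or_ne l i with rfl | hne
      · rw [Finsupp.single_eq_same, Finsupp.single_eq_of_ne' hii'] at hl
        have := h2 l
        omega
      · rcases eq_or_ne l i' with rfl | hne'
        · rw [Finsupp.single_eq_same, Finsupp.single_eq_of_ne' (fun hh => hne hh.symm)] at hl
          have := h2 l
          omega
        · rw [Finsupp.single_eq_of_ne' (fun hh => hne hh.symm),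
            Finsupp.single_eq_of_ne' (fun hh => hne' hh.symm)] at hl
          rcases le_or_gt (h l) m with hc | hc
          · omega
          · have hiil : i ∉ ({i', l} : Finset (Fin (N+1))) := by
              simp only [Finset.mem_insert, Finset.mem_singleton]
              push_neg
              exact ⟨fun hh => hii' hh.symm, fun hh => hne hh.symm⟩
            have hi'l : i' ∉ ({l} : Finset (Fin (N+1))) := by
              simp only [Finset.mem_singleton]
              exact fun hh => hne' hh.symm
            have hs := Finset.sum_le_sum_of_subset (f := fun x => h x)
              (Finset.subset_univ ({i, i', l} : Finset (Fin (N+1))))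
            rw [Finset.sum_insert hiil, Finset.sum_insert hi'l, Finset.sum_singleton] at hs
            have hs' : h i + (h i' + h l) ≤ mdeg h := hs
            have hmaxl := hmax l (Finset.mem_univ _)
            omega
    obtain ⟨p', hple, hpdeg, hpI⟩ := ih h' c1 c2
    refine ⟨p' + Finsupp.single i 1 + Finsupp.single i' 1, ?_, ?_, ?_⟩
    · rw [hsplit]
      intro l
      simp only [Finsupp.add_apply]
      have := Finsupp.le_def.1 hple l
      omega
    · rw [mdeg_add, mdeg_add, mdeg_single, mdeg_single, hpdeg]
      ring
    · have : (monomial (p' + Finsupp.single i 1 + Finsupp.single i' 1) (1:k))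
          = monomial p' 1 * (X i * X i') := by
        simp only [X_eq, monomial_mul, one_mul, add_assoc]
      rw [this, pow_succ]
      exact Ideal.mul_mem_mul hpI (hpair i i' (fun h => hii' h.symm))

lemma truncate : ∀ (s : ℕ) (c : Fin (N + 1) →₀ ℕ), s ≤ mdeg c →
    ∃ b : Fin (N + 1) →₀ ℕ, b ≤ c ∧ mdeg b = s := by
  intro s
  induction s with
  | zero => exact fun c _ => ⟨0, zero_le, by simp [mdeg]⟩
  | succ s ih =>
    intro c hs
    obtain ⟨i, hi⟩ := exists_pos_of_mdeg_pos (by omega : mdeg c ≠ 0)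
    have hsplit := split_single hi
    set c' := c - Finsupp.single i 1 with hc'
    have hdeg' : mdeg c = mdeg c' + 1 := by
      have := congrArg mdeg hsplit
      rw [mdeg_add, mdeg_single] at this
      omega
    obtain ⟨b', hble, hbdeg⟩ := ih c' (by omega)
    refine ⟨b' + Finsupp.single i 1, ?_, by rw [mdeg_add, mdeg_single, hbdeg]⟩
    intro l
    have h1 := Finsupp.le_def.1 hble l
    have h2 : c' l = c l - (Finsupp.single i 1) l := by
      rw [hc', Finsupp.tsub_apply]
    simp only [Finsupp.add_apply]
    rcases eq_or_ne l i with rfl | hne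
    · rw [Finsupp.single_eq_same] at h2 ⊢
      omega
    · rw [Finsupp.single_eq_of_ne' (fun hh => hne hh.symm)] at h2 ⊢
      omega

/-! ### The key containment for coordinate points -/

section Key

variable {n : ℕ}

lemma head_image (hn2 : n ≤ N + 1) :
    (Finset.univ.image (Fin.castLE hn2) : Finset (Fin (N + 1)))
      = Finset.univ.filter (fun i : Fin (N + 1) => (i : ℕ) < n) := by
  ext i
  simp only [Finset.mem_image, Finset.mem_filter, Finset.mem_univ, true_and]
  constructor
  · rintro ⟨j, -, rfl⟩
    exact j.isLt
  · intro h
    exact ⟨⟨(i : ℕ), h⟩, Fin.ext rfl⟩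

lemma sum_head (hn2 : n ≤ N + 1) (a : Fin (N + 1) →₀ ℕ) :
    ∑ j : Fin n, a (Fin.castLE hn2 j) = mdeg (a.filter (fun i : Fin (N + 1) => (i : ℕ) < n)) := by
  classical
  have h1 : mdeg (a.filter (fun i : Fin (N + 1) => (i : ℕ) < n))
      = ∑ i : Fin (N + 1), if (i : ℕ) < n then a i else 0 := by
    rw [mdeg]
    apply Finset.sum_congr rfl
    intro i _
    rw [Finsupp.filter_apply]
  rw [h1, ← Finset.sum_filter, ← head_image hn2,
    Finset.sum_image (fun x _ y _ h => Fin.castLE_injective hn2 h)]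

/-- The coordinate points. -/
def cpt (k : Type*) [Field k] {N n : ℕ} (hn2 : n ≤ N + 1) (j : Fin n) : Fin (N + 1) → k :=
  Pi.single (Fin.castLE hn2 j) 1

lemma X_mem_Icp (hn2 : n ≤ N + 1) {i : Fin (N + 1)} (hi : n ≤ (i : ℕ)) :
    (X i : MvPolynomial (Fin (N + 1)) k) ∈ fatIdeal (cpt k hn2) (fun _ => 1) := by
  rw [fatIdeal]
  rw [Submodule.mem_iInf]
  intro j
  rw [pow_one, cpt, pointIdeal_single]
  apply X_mem_wtIdeal
  refine Finset.mem_erase.2 ⟨?_, Finset.mem_univ _⟩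
  intro hcon
  have : (i : ℕ) < n := by
    rw [hcon]
    exact j.isLt
  omega

lemma XX_mem_Icp (hn2 : n ≤ N + 1) {i i' : Fin (N + 1)} (hne : i ≠ i') :
    (X i * X i' : MvPolynomial (Fin (N + 1)) k) ∈ fatIdeal (cpt k hn2) (fun _ => 1) := by
  rw [fatIdeal]
  rw [Submodule.mem_iInf]
  intro j
  rw [pow_one, cpt, pointIdeal_single]
  apply XX_mem_wtIdeal
  rcases eq_or_ne i (Fin.castLE hn2 j) with rfl | hni
  · right
    exact Finset.mem_erase.2 ⟨fun hcon => hne hcon.symm, Finset.mem_univ _⟩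
  · left
    exact Finset.mem_erase.2 ⟨hni, Finset.mem_univ _⟩

lemma key (hN : 2 ≤ N) (hn1 : 1 ≤ n) (hn2 : n ≤ N + 1) {r : ℕ} (hr : 1 ≤ r)
    (a : Fin (N + 1) →₀ ℕ)
    (ha : ∀ j : Fin n, N * r + a (Fin.castLE hn2 j) ≤ mdeg a) :
    (monomial a (1 : k)) ∈
      maxIdeal k N ^ ((N - 1) * r) * (fatIdeal (cpt k hn2) (fun _ => 1)) ^ r := by
  classical
  set I := fatIdeal (cpt k hn2) (fun _ => (1:ℕ)) with hI
  have hrN : r ≤ N * r := le_trans (by omega) (Nat.mul_le_mul_right r hN)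
  have h2r : 2 * r ≤ N * r := Nat.mul_le_mul_right r hN
  have hQ : (N - 1) * r + r = N * r := by
    have h1 : N - 1 + 1 = N := by omega
    calc (N - 1) * r + r = (N - 1 + 1) * r := by rw [add_one_mul]
    _ = N * r := by rw [h1]
  have ha0 : N * r ≤ mdeg a := le_trans (Nat.le_add_right _ _) (ha ⟨0, hn1⟩)
  -- maxIdeal powers contain monomials of large degree
  have hmax : ∀ (s : ℕ) (c : Fin (N + 1) →₀ ℕ), s ≤ mdeg c →
      (monomial c (1:k)) ∈ maxIdeal k N ^ s := by
    intro s
    induction s with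
    | zero =>
      intro c _
      rw [pow_zero, Ideal.one_eq_top]
      exact Submodule.mem_top
    | succ s ih =>
      intro c hs
      obtain ⟨i, hi⟩ := exists_pos_of_mdeg_pos (by omega : mdeg c ≠ 0)
      have hsplit := split_single hi
      set c' := c - Finsupp.single i 1 with hc'
      have hdeg' : mdeg c = mdeg c' + 1 := by
        have := congrArg mdeg hsplit
        rw [mdeg_add, mdeg_single] at this
        omega
      have hb2 : c' + Finsupp.single i 1 = c := by
        ext l
        have h1 : c' l = c l - (Finsupp.single i 1) l := by rw [hc', Finsupp.tsub_apply]
        simp only [Finsupp.add_apply]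
        rcases eq_or_ne l i with rfl | hne
        · rw [Finsupp.single_eq_same] at h1 ⊢
          omega
        · rw [Finsupp.single_eq_of_ne' (fun hh => hne hh.symm)] at h1 ⊢
          omega
      have heq : (monomial c (1:k)) = monomial c' 1 * X i := by
        rw [X_eq, monomial_mul, mul_one]
        exact (congrArg (fun t => (monomial t (1:k))) hb2).symm
      rw [heq, pow_succ]
      exact Ideal.mul_mem_mul (ih c' (by omega)) (Ideal.subset_span ⟨i, rfl⟩)
  -- decompose a
  suffices hsuf : ∃ b : Fin (N + 1) →₀ ℕ, b ≤ a ∧ ((N - 1) * r + mdeg b ≤ mdeg a) ∧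
      (monomial b (1:k)) ∈ I ^ r by
    obtain ⟨b, hba, hdegb, hbI⟩ := hsuf
    have hsplit : (a - b) + b = a := by
      ext l
      have h1 := Finsupp.le_def.1 hba l
      simp only [Finsupp.add_apply, Finsupp.tsub_apply]
      omega
    have hdegab : mdeg (a - b) + mdeg b = mdeg a := by
      have := congrArg mdeg hsplit
      rw [mdeg_add] at this
      omega
    have heq : (monomial a (1:k)) = monomial (a - b) 1 * monomial b 1 := by
      rw [monomial_mul, one_mul]
      exact (congrArg (fun t => (monomial t (1:k))) hsplit).symm
    rw [heq]
    exact Ideal.mul_mem_mul (hmax _ _ (by omega)) hbI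
  -- construct b
  set hd := a.filter (fun i : Fin (N + 1) => (i : ℕ) < n) with hhd
  set tl := a.filter (fun i : Fin (N + 1) => ¬ (i : ℕ) < n) with htl
  have hsum : hd + tl = a := Finsupp.filter_pos_add_filter_neg a _
  have hdegsum : mdeg hd + mdeg tl = mdeg a := by
    have := congrArg mdeg hsum
    rw [mdeg_add] at this
    omega
  have htl_supp : ∀ i, tl i ≠ 0 → n ≤ (i : ℕ) := by
    intro i hi
    by_contra hcon
    push_neg at hcon
    exact hi (by rw [htl, Finsupp.filter_apply_neg (fun i : Fin (N + 1) => ¬ (i : ℕ) < n) a (by omega : ¬ ¬ (i : ℕ) < n)])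
  have hhd_app : ∀ i : Fin (N + 1), (i : ℕ) < n → hd i = a i := by
    intro i hi
    rw [hhd, Finsupp.filter_apply_pos (fun i : Fin (N + 1) => (i : ℕ) < n) a hi]
  have hhd_app' : ∀ i : Fin (N + 1), ¬ (i : ℕ) < n → hd i = 0 := by
    intro i hi
    rw [hhd, Finsupp.filter_apply_neg (fun i : Fin (N + 1) => (i : ℕ) < n) a hi]
  have htlI : (monomial tl (1:k)) ∈ I ^ (mdeg tl) :=
    monomial_mem_pow_of_X_mem I (mdeg tl) tl
      (fun i hi => X_mem_Icp hn2 (htl_supp i hi)) rfl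
  have htl_le : tl ≤ a := by
    intro l
    have := DFunLike.congr_fun hsum l
    simp only [Finsupp.add_apply] at this
    omega
  set T := mdeg tl with hT
  rcases le_or_gt r T with hcase | hcase
  · -- enough tail variables
    obtain ⟨b, hble, hbdeg⟩ := truncate r tl hcase
    refine ⟨b, le_trans hble htl_le, by omega, ?_⟩
    apply monomial_mem_pow_of_X_mem I r b _ hbdeg
    intro i hi
    apply X_mem_Icp hn2
    apply htl_supp
    have := Finsupp.le_def.1 hble i
    omega
  · -- use pairs among the head variables
    have hn2' : 2 ≤ n := by
      by_contra hcon
      have hn_eq : n = 1 := by omega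
      subst hn_eq
      have hH : mdeg hd = a (Fin.castLE hn2 0) := by
        rw [hhd, ← sum_head hn2 a]
        exact Fin.sum_univ_one _
      have := ha 0
      omega
    set m := r - T with hm
    have hc1 : 2 * m ≤ mdeg hd := by omega
    have hc2 : ∀ i, m + hd i ≤ mdeg hd := by
      intro i
      rcases lt_or_ge ((i : ℕ)) n with hi | hi
      · rw [hhd_app i hi]
        have := ha ⟨(i : ℕ), hi⟩
        have hcast : Fin.castLE hn2 ⟨(i : ℕ), hi⟩ = i := by
          apply Fin.ext
          rfl
        rw [hcast] at this
        omega
      · rw [hhd_app' i (by omega)]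
        omega
    obtain ⟨p, hple, hpdeg, hpI⟩ := pairing I (fun i i' hne => XX_mem_Icp hn2 hne) m hd hc1 hc2
    have hpa : p + tl ≤ a := by
      intro l
      have h1 := Finsupp.le_def.1 hple l
      have h2 := DFunLike.congr_fun hsum l
      simp only [Finsupp.add_apply] at h2 ⊢
      omega
    have hbdeg : mdeg (p + tl) = 2 * m + T := by rw [mdeg_add, hpdeg]
    have hbI : (monomial (p + tl) (1:k)) ∈ I ^ r := by
      have heq : (monomial (p + tl) (1:k)) = monomial p 1 * monomial tl 1 := by
        rw [monomial_mul, one_mul]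
      have hmem := Ideal.mul_mem_mul hpI htlI
      rw [← pow_add] at hmem
      have hmT : m + T = r := by omega
      rw [hmT] at hmem
      rw [heq]
      exact hmem
    refine ⟨p + tl, hpa, ?_, hbI⟩
    -- the degree bound: need (N+1)*r ≤ mdeg a + T
    have hsum_ha : n * (N * r) + mdeg hd ≤ n * mdeg a := by
      have h1 : ∑ j : Fin n, (N * r + a (Fin.castLE hn2 j)) ≤ ∑ _j : Fin n, mdeg a :=
        Finset.sum_le_sum (fun j _ => ha j)
      rw [Finset.sum_add_distrib, Finset.sum_const, Finset.sum_const, Finset.card_univ,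
        Fintype.card_fin, smul_eq_mul, smul_eq_mul, sum_head hn2 a, ← hhd] at h1
      exact h1
    obtain ⟨q, hq⟩ : ∃ q, n = q + 1 := ⟨n - 1, by omega⟩
    have hq1 : 1 ≤ q := by omega
    have hqN : q ≤ N := by omega
    have e1 : n * (N * r) = q * (N * r) + N * r := by rw [hq, add_mul, one_mul]
    have e2 : n * mdeg a = q * mdeg a + mdeg a := by rw [hq, add_mul, one_mul]
    have hA1 : q * (N * r) + (N * r) + mdeg hd ≤ q * mdeg a + mdeg a := by omega
    rw [hbdeg]
    have hmain : N * r + r ≤ mdeg a + T := by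
      have s2 : q * (N * r) + (N * r) ≤ q * mdeg a + T := by omega
      have s3 : q * r ≤ N * r := Nat.mul_le_mul_right r hqN
      have s7 : T ≤ q * T := Nat.le_mul_of_pos_left T (by omega)
      have s8 : q * (N * r + r) ≤ q * (mdeg a + T) := by
        rw [mul_add, mul_add]
        omega
      exact Nat.le_of_mul_le_mul_left s8 (by omega)
    omega

theorem coord_containment (hN : 2 ≤ N) (hn1 : 1 ≤ n) (hn2 : n ≤ N + 1) {r : ℕ} (hr : 1 ≤ r) :
    fatIdeal (cpt k hn2) (fun _ => N * r) ≤
      maxIdeal k N ^ ((N - 1) * r) * (fatIdeal (cpt k hn2) (fun _ => 1)) ^ r := by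
  intro f hf
  rw [fatIdeal, Submodule.mem_iInf] at hf
  have hsup : ∀ a ∈ f.support, ∀ j : Fin n, N * r + a (Fin.castLE hn2 j) ≤ mdeg a := by
    intro a haf j
    have h1 := hf j
    rw [cpt, pointIdeal_single] at h1
    have h2 := wtIdeal_pow_le (N * r) h1
    have h3 := mem_wtIdeal.1 h2 a haf
    have h4 : a (Fin.castLE hn2 j) + ∑ i ∈ Finset.univ.erase (Fin.castLE hn2 j), a i = ∑ i, a i :=
      Finset.add_sum_erase _ _ (Finset.mem_univ _)
    have h5 : mdeg a = ∑ i, a i := rfl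
    omega
  have hform : f = ∑ a ∈ f.support, monomial a (coeff a f) := as_sum f
  rw [hform]
  apply Ideal.sum_mem
  intro a haf
  have hCm : (monomial a (coeff a f) : MvPolynomial (Fin (N + 1)) k)
      = C (coeff a f) * monomial a 1 := by rw [C_mul_monomial, mul_one]
  rw [hCm]
  exact Ideal.mul_mem_left _ _ (key hN hn1 hn2 hr a (hsup a haf))

end Key

/-! ### Linear changes of coordinates -/

section Subst

variable (B B' : Matrix (Fin (N + 1)) (Fin (N + 1)) k)

noncomputable def subst : MvPolynomial (Fin (N + 1)) k →ₐ[k] MvPolynomial (Fin (N + 1)) k :=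
  aeval (fun i => ∑ l, C (B i l) * X l)

lemma subst_apply (f : MvPolynomial (Fin (N + 1)) k) :
    subst B f = aeval (fun i => ∑ l, C (B i l) * X l) f := rfl

lemma subst_comp : (subst B).comp (subst B') = subst (k := k) (B' * B) := by
  rw [subst, subst, subst, comp_aeval]
  congr 1
  funext i
  rw [map_sum]
  have h1 : ∀ l, (aeval (fun i => ∑ l, C (B i l) * X l)) (C (B' i l) * X l)
      = ∑ m, C (B' i l * B l m) * X m := by
    intro l
    rw [map_mul, aeval_C, aeval_X, algebraMap_eq, Finset.mul_sum]
    apply Finset.sum_congr rfl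
    intro m _
    rw [← mul_assoc, ← C_mul]
  rw [Finset.sum_congr rfl (fun l _ => h1 l), Finset.sum_comm]
  apply Finset.sum_congr rfl
  intro m _
  rw [← Finset.sum_mul, ← map_sum]
  rw [Matrix.mul_apply]

lemma subst_one : subst (k := k) (N := N) 1 = AlgHom.id k _ := by
  rw [subst, ← aeval_X_left]
  congr 1
  funext i
  rw [Finset.sum_eq_single_of_mem i (Finset.mem_univ i)
    (fun l _ hl => by rw [Matrix.one_apply_ne (fun hh => hl hh.symm), map_zero, zero_mul]),
    Matrix.one_apply_eq, map_one, one_mul]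

lemma eval_subst (p : Fin (N + 1) → k) (f : MvPolynomial (Fin (N + 1)) k) :
    eval p (subst B f) = eval (B.mulVec p) f := by
  induction f using MvPolynomial.induction_on with
  | C a => rw [subst_apply, aeval_C, algebraMap_eq, eval_C, eval_C]
  | add f g hf hg => rw [map_add, map_add, map_add, hf, hg]
  | mul_X f i hf =>
    have hX : eval p (subst B (X i)) = eval (B.mulVec p) (X i) := by
      rw [subst_apply, aeval_X, eval_X, map_sum]
      have h1 : ∀ l, eval p (C (B i l) * X l) = B i l * p l := by
        intro l
        rw [map_mul, eval_C, eval_X]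
      rw [Finset.sum_congr rfl (fun l _ => h1 l)]
      rfl
    simp only [map_mul, hf, hX]

noncomputable def substEquiv (h1 : B * B' = 1) (h2 : B' * B = 1) :
    MvPolynomial (Fin (N + 1)) k ≃ₐ[k] MvPolynomial (Fin (N + 1)) k :=
  AlgEquiv.ofAlgHom (subst B) (subst B')
    (by rw [subst_comp, h2, subst_one])
    (by rw [subst_comp, h1, subst_one])

lemma substEquiv_apply (h1 : B * B' = 1) (h2 : B' * B = 1) (f : MvPolynomial (Fin (N + 1)) k) :
    substEquiv B B' h1 h2 f = subst B f := rfl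

lemma substEquiv_symm_apply (h1 : B * B' = 1) (h2 : B' * B = 1) (f : MvPolynomial (Fin (N + 1)) k) :
    (substEquiv B B' h1 h2).symm f = subst B' f := rfl

lemma subst_isHomogeneous {f : MvPolynomial (Fin (N + 1)) k} {d : ℕ}
    (hf : f.IsHomogeneous d) : (subst B f).IsHomogeneous d := by
  have h := hf.aeval (fun i => ∑ l, C (B i l) * X l)
    (fun i => IsHomogeneous.sum _ _ _ (fun l _ => isHomogeneous_C_mul_X _ _))
  rw [one_mul] at h
  exact h

lemma map_iInf_ringEquiv {R S : Type*} [CommRing R] [CommRing S] (e : R ≃+* S) {ι : Sort*}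
    (I : ι → Ideal R) :
    Ideal.map e (⨅ i, I i) = ⨅ i, Ideal.map e (I i) := by
  simp_rw [← Ideal.comap_symm]
  rw [Ideal.comap_iInf]

lemma map_pointIdeal (h1 : B * B' = 1) (h2 : B' * B = 1) (q : Fin (N + 1) → k) :
    Ideal.map (substEquiv B B' h1 h2).toRingEquiv (pointIdeal (B.mulVec q)) = pointIdeal q := by
  rw [pointIdeal, pointIdeal, Ideal.map_span]
  congr 1
  ext g
  constructor
  · rintro ⟨f, ⟨⟨d, hd⟩, hev⟩, rfl⟩
    refine ⟨⟨d, subst_isHomogeneous B hd⟩, ?_⟩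
    show eval q (subst B f) = 0
    rw [eval_subst]
    exact hev
  · rintro ⟨⟨d, hd⟩, hev⟩
    refine ⟨subst B' g, ⟨⟨d, subst_isHomogeneous B' hd⟩, ?_⟩, ?_⟩
    · rw [eval_subst, Matrix.mulVec_mulVec, h2, Matrix.one_mulVec]
      exact hev
    · show subst B (subst B' g) = g
      have hcomp := DFunLike.congr_fun (subst_comp (k := k) B B') g
      rw [AlgHom.comp_apply] at hcomp
      rw [hcomp, h2, subst_one]
      rfl

lemma map_fatIdeal {n : ℕ} (h1 : B * B' = 1) (h2 : B' * B = 1)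
    (pp qq : Fin n → (Fin (N + 1) → k)) (hpq : ∀ j, B.mulVec (pp j) = qq j)
    (mm : Fin n → ℕ) :
    Ideal.map (substEquiv B B' h1 h2).toRingEquiv (fatIdeal qq mm) = fatIdeal pp mm := by
  rw [fatIdeal, fatIdeal, map_iInf_ringEquiv]
  apply iInf_congr
  intro j
  rw [Ideal.map_pow]
  rw [← hpq j, map_pointIdeal B B' h1 h2 (pp j)]

lemma subst_X_mem_maxIdeal (i : Fin (N + 1)) : subst B (X i) ∈ maxIdeal k N := by
  rw [subst_apply, aeval_X]
  exact Ideal.sum_mem _ (fun l _ => Ideal.mul_mem_left _ _ (Ideal.subset_span ⟨l, rfl⟩))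

lemma map_maxIdeal (h1 : B * B' = 1) (h2 : B' * B = 1) :
    Ideal.map (substEquiv B B' h1 h2).toRingEquiv (maxIdeal k N) = maxIdeal k N := by
  apply le_antisymm
  · rw [maxIdeal, Ideal.map_span, Ideal.span_le]
    rintro g ⟨f, ⟨i, rfl⟩, rfl⟩
    exact subst_X_mem_maxIdeal B i
  · nth_rewrite 1 [maxIdeal]
    rw [Ideal.span_le]
    rintro g ⟨i, rfl⟩
    have hxi : X i = (substEquiv B B' h1 h2).toRingEquiv (subst B' (X i)) := by
      show X i = subst B (subst B' (X i))
      have hcomp := DFunLike.congr_fun (subst_comp (k := k) B B') (X i)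
      rw [AlgHom.comp_apply] at hcomp
      rw [hcomp, h2, subst_one]
      rfl
    rw [SetLike.mem_coe, hxi]
    exact Ideal.mem_map_of_mem _ (subst_X_mem_maxIdeal B' i)

end Subst

/-! ### Extending linearly independent families and the change-of-basis matrix -/

section LinAlg

lemma finrank_fun : Module.finrank k (Fin (N + 1) → k) = N + 1 := by
  simp [Module.finrank_pi]

lemma extend_li : ∀ (d m : ℕ), m + d = N + 1 → ∀ (v : Fin m → (Fin (N + 1) → k)),
    LinearIndependent k v → ∃ w : Fin (N + 1) → (Fin (N + 1) → k),
      LinearIndependent k w ∧ ∀ j : Fin m, ∀ (hle : m ≤ N + 1), w (Fin.castLE hle j) = v j := by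
  intro d
  induction d with
  | zero =>
    intro m h v hv
    have hm : m = N + 1 := by omega
    subst hm
    exact ⟨v, hv, fun j _ => congrArg v (Fin.ext rfl)⟩
  | succ d ih =>
    intro m h v hv
    have hm : m < N + 1 := by omega
    obtain ⟨u, hu⟩ := exists_linearIndependent_snoc_of_lt_finrank hv
      (by rw [finrank_fun]; omega)
    obtain ⟨w, hw, hwj⟩ := ih (m + 1) (by omega) _ hu
    refine ⟨w, hw, fun j hle => ?_⟩
    have hj := hwj (Fin.castSucc j) (by omega)
    rw [Fin.snoc_castSucc] at hj
    rw [← hj]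
    exact congrArg w (Fin.ext rfl)

lemma exists_matrix {n : ℕ} (hn2 : n ≤ N + 1) (p : Fin n → (Fin (N + 1) → k))
    (hli : LinearIndependent k p) :
    ∃ B B' : Matrix (Fin (N + 1)) (Fin (N + 1)) k, B * B' = 1 ∧ B' * B = 1 ∧
      ∀ j : Fin n, B.mulVec (Pi.single (Fin.castLE hn2 j) 1) = p j := by
  classical
  obtain ⟨w, hw, hwj⟩ := extend_li (N + 1 - n) n (by omega) p hli
  have hcard : Fintype.card (Fin (N + 1)) = Module.finrank k (Fin (N + 1) → k) := by
    rw [finrank_fun, Fintype.card_fin]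
  let b : Module.Basis (Fin (N + 1)) k (Fin (N + 1) → k) :=
    basisOfLinearIndependentOfCardEqFinrank hw hcard
  have hb : ⇑b = w := coe_basisOfLinearIndependentOfCardEqFinrank hw hcard
  set B : Matrix (Fin (N + 1)) (Fin (N + 1)) k := (Pi.basisFun k (Fin (N + 1))).toMatrix ⇑b with hB
  have : Invertible B := (Pi.basisFun k (Fin (N + 1))).invertibleToMatrix b
  refine ⟨B, ⅟B, mul_invOf_self B, invOf_mul_self B, ?_⟩
  intro j
  rw [Matrix.mulVec_single_one]
  funext i
  show B i (Fin.castLE hn2 j) = p j i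
  rw [hB, Module.Basis.toMatrix_apply, Pi.basisFun_repr, hb, hwj j hn2]

end LinAlg

end SPAux

open SPAux in
theorem statement1' (k : Type*) [Field k] [CharZero k] (N n : ℕ)
    (hN : 2 ≤ N) (hn1 : 1 ≤ n) (hn2 : n ≤ N + 1) :
    ∃ S : Set (MvPolynomial (Fin n × Fin (N + 1)) k),
    (∃ p : Fin n → (Fin (N + 1) → k), (∀ j, p j ≠ 0) ∧
      ∃ f ∈ S, eval (fun q => p q.1 q.2) f ≠ 0) ∧
    ∀ p : Fin n → (Fin (N + 1) → k), (∀ j, p j ≠ 0) →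
      (∃ f ∈ S, eval (fun q => p q.1 q.2) f ≠ 0) →
      (∀ r : ℕ, 1 ≤ r →
        fatIdeal p (fun _ => N * r) ≤
          maxIdeal k N ^ ((N - 1) * r) * (fatIdeal p (fun _ => 1)) ^ r) := by
  classical
  set M : Matrix (Fin n) (Fin n) (MvPolynomial (Fin n × Fin (N + 1)) k) :=
    Matrix.of fun j j' : Fin n => X (j, Fin.castLE hn2 j') with hM
  refine ⟨{M.det}, ⟨cpt k hn2, ?_, M.det, Set.mem_singleton _, ?_⟩, ?_⟩
  · intro j h0
    have h1 := congrFun h0 (Fin.castLE hn2 j)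
    rw [cpt, Pi.single_eq_same] at h1
    exact one_ne_zero (h1.trans (Pi.zero_apply _))
  · -- the witness: coordinate points give determinant 1
    have hmap : M.map (eval (fun q : Fin n × Fin (N + 1) => cpt k hn2 q.1 q.2))
        = (1 : Matrix (Fin n) (Fin n) k) := by
      ext j j'
      rw [Matrix.map_apply, hM, Matrix.of_apply, eval_X, Matrix.one_apply]
      show cpt k hn2 j (Fin.castLE hn2 j') = _
      rw [cpt, Pi.single_apply]
      by_cases hjj : j = j'
      · subst hjj
        rw [if_pos rfl, if_pos rfl]
      · rw [if_neg (fun hh => hjj (Fin.castLE_injective hn2 hh).symm), if_neg hjj]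
    rw [RingHom.map_det, RingHom.mapMatrix_apply, hmap, Matrix.det_one]
    exact one_ne_zero
  · rintro p hp0 ⟨f, hfS, hfne⟩
    rw [Set.mem_singleton_iff] at hfS
    subst hfS
    set A : Matrix (Fin n) (Fin n) k := Matrix.of fun j j' => p j (Fin.castLE hn2 j') with hA
    have hmap : M.map (eval (fun q : Fin n × Fin (N + 1) => p q.1 q.2)) = A := by
      ext j j'
      rw [Matrix.map_apply, hM, Matrix.of_apply, eval_X, hA, Matrix.of_apply]
    have hAdet : A.det ≠ 0 := by
      rw [RingHom.map_det, RingHom.mapMatrix_apply, hmap] at hfne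
      exact hfne
    have hUnit : IsUnit A := (Matrix.isUnit_iff_isUnit_det A).2 (isUnit_iff_ne_zero.2 hAdet)
    have hrows : LinearIndependent k (fun j => A j) :=
      Matrix.linearIndependent_rows_iff_isUnit.2 hUnit
    have hli : LinearIndependent k p := by
      apply LinearIndependent.of_comp
        (LinearMap.funLeft k k (fun j' : Fin n => Fin.castLE hn2 j'))
      have hcomp : (LinearMap.funLeft k k (fun j' : Fin n => Fin.castLE hn2 j')) ∘ p
          = fun j => A j := rfl
      rw [hcomp]
      exact hrows
    obtain ⟨B, B', h1, h2, hcol⟩ := exists_matrix hn2 p hli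
    intro r hr
    have hpq : ∀ j, B'.mulVec (p j) = cpt k hn2 j := by
      intro j
      rw [← hcol j, Matrix.mulVec_mulVec, h2, Matrix.one_mulVec]
      rfl
    have hfat : ∀ mm : Fin n → ℕ,
        Ideal.map (substEquiv B' B h2 h1).toRingEquiv (fatIdeal (cpt k hn2) mm) = fatIdeal p mm :=
      fun mm => map_fatIdeal B' B h2 h1 p (cpt k hn2) hpq mm
    calc fatIdeal p (fun _ => N * r)
        = Ideal.map (substEquiv B' B h2 h1).toRingEquiv (fatIdeal (cpt k hn2) (fun _ => N * r)) :=
          (hfat _).symm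
      _ ≤ Ideal.map (substEquiv B' B h2 h1).toRingEquiv
            (maxIdeal k N ^ ((N - 1) * r) * (fatIdeal (cpt k hn2) (fun _ => 1)) ^ r) :=
          Ideal.map_mono (coord_containment hN hn1 hn2 hr)
      _ = Ideal.map (substEquiv B' B h2 h1).toRingEquiv (maxIdeal k N ^ ((N - 1) * r))
            * Ideal.map (substEquiv B' B h2 h1).toRingEquiv ((fatIdeal (cpt k hn2) (fun _ => 1)) ^ r) :=
          Ideal.map_mul _ _ _
      _ = (Ideal.map (substEquiv B' B h2 h1).toRingEquiv (maxIdeal k N)) ^ ((N - 1) * r)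
            * (Ideal.map (substEquiv B' B h2 h1).toRingEquiv (fatIdeal (cpt k hn2) (fun _ => 1))) ^ r := by
          rw [Ideal.map_pow, Ideal.map_pow]
      _ = maxIdeal k N ^ ((N - 1) * r) * (fatIdeal p (fun _ => 1)) ^ r := by
          rw [map_maxIdeal B' B h2 h1, hfat]

/-- Let `N ≥ 2` and `1 ≤ n ≤ N + 1`. For points in general position in `ℙᴺ`, the
radical ideal `I = ⋂ⱼ m_{pⱼ}` satisfies `I^(Nr) ⊆ M^((N-1)r) * I^r` for all `r ≥ 1`. -/
theorem statement1 (k : Type*) [Field k] [CharZero k] (N n : ℕ)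
    (hN : 2 ≤ N) (hn1 : 1 ≤ n) (hn2 : n ≤ N + 1) :
    Generic k N n (fun p =>
      ∀ r : ℕ, 1 ≤ r →
        fatIdeal p (fun _ => N * r) ≤
          maxIdeal k N ^ ((N - 1) * r) * (fatIdeal p (fun _ => 1)) ^ r) := by
  exact statement1' k N n hN hn1 hn2
end

section
/- (Cremona transformation in P^3.) Let m_1,m_2,m_3,m_4 and m̄ = (m_5,…,m_{4+n}) be integers and let d ≥ 0. If for points in general position in P^3 the fat points ideal I(m_1,m_2,m_3,m_4,m̄) contains a nonzero form of degree d, then for points in general position in P^3 the fat points ideal I(m_1+k, m_2+k, m_3+k, m_4+k, m̄) contains a nonzero form of degree d+k, where k = 2d − m_1 − m_2 − m_3 − m_4. -/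
open MvPolynomial Filter

namespace Stmt6
open Finset
variable {k : Type*} [Field k]

/-- degree of an exponent vector over a fintype -/
lemma degree_eq_sum {σ : Type*} [Fintype σ] (α : σ →₀ ℕ) : α.degree = ∑ i, α i := by
  rw [Finsupp.degree_eq_weight_one]
  simp [Finsupp.weight_apply, Finsupp.sum_fintype]

lemma isHomog_degree {σ : Type*} [Fintype σ] {f : MvPolynomial σ k} {e : ℕ}
    (hf : f.IsHomogeneous e) {α : σ →₀ ℕ} (hα : α ∈ f.support) : ∑ i, α i = e := by
  rw [← degree_eq_sum, Finsupp.degree_eq_weight_one]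
  exact hf (by simpa using hα)

/-- evaluation of a homogeneous polynomial at a scaled point -/
lemma eval_smul_of_isHomogeneous {σ : Type*} [Fintype σ] {f : MvPolynomial σ k} {e : ℕ}
    (hf : f.IsHomogeneous e) (a : k) (v : σ → k) :
    eval (a • v) f = a ^ e * eval v f := by
  rw [eval_eq', eval_eq', Finset.mul_sum]
  refine Finset.sum_congr rfl fun α hα => ?_
  have hdeg : ∑ i, α i = e := isHomog_degree hf hα
  have : ∏ i, (a • v) i ^ α i = a ^ e * ∏ i, v i ^ α i := by
    have : ∀ i, (a • v) i ^ α i = a ^ α i * v i ^ α i := by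
      intro i; simp [Pi.smul_apply, smul_eq_mul, mul_pow]
    rw [Finset.prod_congr rfl (fun i _ => this i), Finset.prod_mul_distrib,
      Finset.prod_pow_eq_pow_sum, hdeg]
  rw [this]; ring

/-- aeval by homogeneous-degree-r substitutions preserves homogeneity (scaled by r) -/
lemma isHomogeneous_aeval {σ : Type*} [Fintype σ] (g : σ → MvPolynomial σ k) (r : ℕ)
    (hg : ∀ i, (g i).IsHomogeneous r) {f : MvPolynomial σ k} {e : ℕ}
    (hf : f.IsHomogeneous e) : (aeval g f).IsHomogeneous (r * e) := by
  conv_lhs => rw [← support_sum_monomial_coeff f]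
  rw [map_sum]
  refine IsHomogeneous.sum _ _ _ fun α hα => ?_
  rw [aeval_monomial]
  have h1 : (α.prod fun i n => g i ^ n).IsHomogeneous (r * e) := by
    rw [Finsupp.prod_fintype _ _ (by intro i; simp)]
    have := IsHomogeneous.prod Finset.univ (fun i => g i ^ α i) (fun i => r * α i)
      (fun i _ => (hg i).pow (α i))
    have hsum : ∑ i, r * α i = r * e := by
      rw [← Finset.mul_sum, isHomog_degree hf hα]
    rwa [hsum] at this
  have h2 := (isHomogeneous_C σ (coeff α f)).mul h1
  simpa using h2

/-- the main transfer lemma for powers of point ideals along algebra maps -/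
lemma pointIdeal_pow_map {σ : Type*} [Fintype σ]
    (A : MvPolynomial σ k →ₐ[k] MvPolynomial σ k)
    (hA : ∀ (g : MvPolynomial σ k) (e : ℕ), g.IsHomogeneous e → ∃ e', (A g).IsHomogeneous e')
    (w v : σ → k)
    (hev : ∀ (g : MvPolynomial σ k) (e : ℕ), g.IsHomogeneous e → eval w g = 0 →
      eval v (A g) = 0)
    {b : ℕ} {f : MvPolynomial σ k} (hf : f ∈ (pointIdeal w) ^ b) :
    A f ∈ (pointIdeal v) ^ b := by
  have hmap : Ideal.map A ((pointIdeal w) ^ b) ≤ (pointIdeal v) ^ b := by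
    rw [Ideal.map_pow]
    refine Ideal.pow_right_mono ?_ b
    rw [show pointIdeal w = Ideal.span { f : MvPolynomial σ k | (∃ d, f.IsHomogeneous d) ∧ eval w f = 0 } from rfl, Ideal.map_span, Ideal.span_le]
    rintro x ⟨g, ⟨⟨e, hge⟩, hg0⟩, rfl⟩
    refine Ideal.subset_span ⟨hA g e hge, hev g e hge hg0⟩
  exact hmap (Ideal.mem_map_of_mem A hf)

end Stmt6

namespace Stmt6
set_option linter.unusedSectionVars false
variable {k : Type*} [Field k] {σ : Type*} [Fintype σ] [DecidableEq σ]

/-- linear substitution by a matrix -/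
noncomputable def psi (M : Matrix σ σ k) : MvPolynomial σ k →ₐ[k] MvPolynomial σ k :=
  aeval (fun i => ∑ l, C (M i l) * X l)

lemma eval_psi (M : Matrix σ σ k) (v : σ → k) (f : MvPolynomial σ k) :
    eval v (psi M f) = eval (M.mulVec v) f := by
  have h : (eval v).comp ((psi M : MvPolynomial σ k →ₐ[k] MvPolynomial σ k) :
      MvPolynomial σ k →+* MvPolynomial σ k) = eval (M.mulVec v) := by
    apply ringHom_ext
    · intro r; simp [psi]
    · intro i; simp [psi, Matrix.mulVec, dotProduct]
  exact RingHom.congr_fun h f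

lemma psi_psi (M N : Matrix σ σ k) (f : MvPolynomial σ k) :
    psi M (psi N f) = psi (N * M) f := by
  have h : (psi M).comp (psi N) = psi (N * M) := by
    apply MvPolynomial.algHom_ext
    intro i
    simp only [AlgHom.coe_comp, Function.comp_apply, psi, aeval_X, map_sum, map_mul, aeval_C,
      MvPolynomial.algebraMap_eq, Matrix.mul_apply, Finset.mul_sum]
    rw [Finset.sum_comm]
    refine Finset.sum_congr rfl fun t _ => ?_
    rw [Finset.sum_mul]
    exact Finset.sum_congr rfl fun x _ => (mul_assoc _ _ _).symm
  exact AlgHom.congr_fun h f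

lemma psi_one (f : MvPolynomial σ k) : psi (1 : Matrix σ σ k) f = f := by
  have h : (psi (1 : Matrix σ σ k)) = AlgHom.id k (MvPolynomial σ k) := by
    apply MvPolynomial.algHom_ext
    intro i
    simp [psi, Matrix.one_apply, apply_ite C, ite_mul]
  rw [h]; rfl

lemma psi_injective (M : Matrix σ σ k) (hM : IsUnit M.det) :
    Function.Injective (psi (k := k) M) := by
  intro f g h
  have := congrArg (psi M⁻¹) h
  rwa [psi_psi, psi_psi, Matrix.mul_nonsing_inv _ hM, psi_one, psi_one] at this

lemma psi_isHomogeneous (M : Matrix σ σ k) {f : MvPolynomial σ k} {e : ℕ}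
    (hf : f.IsHomogeneous e) : (psi M f).IsHomogeneous e := by
  have := isHomogeneous_aeval (fun i => ∑ l, C (M i l) * X l) 1
    (fun i => IsHomogeneous.sum _ _ _ fun l _ => by
      simpa using (isHomogeneous_C σ (M i l)).mul (isHomogeneous_X k l)) hf
  rw [one_mul] at this; exact this

lemma psi_pointIdeal_pow (M : Matrix σ σ k) {w v : σ → k} (a : k)
    (hMv : M.mulVec v = a • w) {b : ℕ} {f : MvPolynomial σ k}
    (hf : f ∈ pointIdeal w ^ b) : psi M f ∈ pointIdeal v ^ b :=
  pointIdeal_pow_map (psi M) (fun g e hge => ⟨e, psi_isHomogeneous M hge⟩) w v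
    (fun g e hge h0 => by
      rw [eval_psi, hMv, eval_smul_of_isHomogeneous hge, h0, mul_zero]) hf

end Stmt6

namespace Stmt6
set_option linter.unusedSectionVars false
variable {k : Type*} [Field k] {σ : Type*} [Fintype σ] [DecidableEq σ]

/-- the coordinate point -/
def ept (k : Type*) [Field k] {σ : Type*} [DecidableEq σ] (i : σ) : σ → k :=
  fun r => if r = i then 1 else 0

/-- weight of an exponent vector away from coordinate `i` -/
def wdeg (i : σ) (α : σ →₀ ℕ) : ℕ := ∑ l ∈ Finset.univ.erase i, α l

lemma wdeg_add (i : σ) (α β : σ →₀ ℕ) : wdeg i (α + β) = wdeg i α + wdeg i β := by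
  simp [wdeg, Finset.sum_add_distrib]

lemma sum_eq_add_wdeg (i : σ) (α : σ →₀ ℕ) : ∑ l, α l = α i + wdeg i α :=
  (Finset.add_sum_erase _ _ (Finset.mem_univ i)).symm

lemma ept_ne_zero (i : σ) : ept k i ≠ 0 := by
  intro h
  have := congrFun h i
  simp [ept] at this

lemma eval_ept {f : MvPolynomial σ k} {e : ℕ} (hf : f.IsHomogeneous e) (i : σ) :
    eval (ept k i) f = coeff (Finsupp.single i e) f := by
  rw [eval_eq']
  rw [Finset.sum_eq_single (Finsupp.single i e)]
  · rcases eq_or_ne (coeff (Finsupp.single i e) f) 0 with h | h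
    · simp [h]
    · have : ∏ l, ept k i l ^ (Finsupp.single i e) l = 1 := by
        refine Finset.prod_eq_one fun l _ => ?_
        rcases eq_or_ne l i with rfl | hne
        · simp [ept]
        · simp [ept, hne, Finsupp.single_apply, Ne.symm hne]
      rw [this, mul_one]
  · intro α hα hne
    have : ∃ l, l ≠ i ∧ α l ≠ 0 := by
      by_contra hno
      push_neg at hno
      have hαi : α = Finsupp.single i (α i) := by
        ext l
        rcases eq_or_ne l i with rfl | h
        · simp
        · simp [Finsupp.single_apply, Ne.symm h, hno l h]
      have hsum := isHomog_degree hf hα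
      rw [sum_eq_add_wdeg i] at hsum
      have hw : wdeg i α = 0 :=
        Finset.sum_eq_zero fun l hl => hno l (Finset.ne_of_mem_erase hl)
      rw [hw, add_zero] at hsum
      exact hne (by rw [hαi, hsum])
    obtain ⟨l, hli, hl⟩ := this
    have : ept k i l ^ α l = 0 := by
      simp [ept, hli, zero_pow hl]
    rw [Finset.prod_eq_zero (Finset.mem_univ l) this, mul_zero]
  · intro h; rw [MvPolynomial.notMem_support_iff.mp h, zero_mul]

end Stmt6

namespace Stmt6
set_option linter.unusedSectionVars false
variable {k : Type*} [Field k] {σ : Type*} [Fintype σ] [DecidableEq σ]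

lemma support_mul_wdeg {f g : MvPolynomial σ k} {α : σ →₀ ℕ}
    (hα : α ∈ (f * g).support) : ∃ β ∈ f.support, ∃ γ ∈ g.support, β + γ = α := by
  have := MvPolynomial.support_mul f g hα
  rwa [Finset.mem_add] at this

/-- the ideal of polynomials all of whose monomials have weight at least `b` away from `i` -/
def wIdeal (k : Type*) [Field k] {σ : Type*} [Fintype σ] [DecidableEq σ] (i : σ) (b : ℕ) :
    Ideal (MvPolynomial σ k) where
  carrier := {f | ∀ α ∈ f.support, b ≤ wdeg i α}
  zero_mem' := by intro α hα; simp at hα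
  add_mem' := by
    intro f g hf hg α hα
    have := MvPolynomial.support_add hα
    rcases Finset.mem_union.mp this with h | h
    · exact hf α h
    · exact hg α h
  smul_mem' := by
    intro c f hf α hα
    obtain ⟨β, _, γ, hγ, rfl⟩ := support_mul_wdeg (f := c) (g := f) (by simpa using hα)
    rw [wdeg_add]
    exact le_add_of_le_right (hf γ hγ)

lemma mem_wIdeal {i : σ} {b : ℕ} {f : MvPolynomial σ k} :
    f ∈ wIdeal k i b ↔ ∀ α ∈ f.support, b ≤ wdeg i α := Iff.rfl

lemma wIdeal_mul_le {i : σ} {a b : ℕ} {f g : MvPolynomial σ k}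
    (hf : f ∈ wIdeal k i a) (hg : g ∈ wIdeal k i b) : f * g ∈ wIdeal k i (a + b) := by
  intro α hα
  obtain ⟨β, hβ, γ, hγ, rfl⟩ := support_mul_wdeg hα
  rw [wdeg_add]
  exact add_le_add (hf β hβ) (hg γ hγ)

lemma pointIdeal_ept_le (i : σ) : pointIdeal (ept k i) ≤ wIdeal k i 1 := by
  rw [pointIdeal, Ideal.span_le]
  rintro g ⟨⟨e, hge⟩, h0⟩ α hα
  by_contra hlt
  push_neg at hlt
  have hw : wdeg i α = 0 := Nat.lt_one_iff.mp hlt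
  have hno : ∀ l, l ≠ i → α l = 0 := by
    intro l hl
    refine Finset.sum_eq_zero_iff.mp hw l (Finset.mem_erase.mpr ⟨hl, Finset.mem_univ l⟩)
  have hαi : α = Finsupp.single i e := by
    have hsum := isHomog_degree hge hα
    rw [sum_eq_add_wdeg i, hw, add_zero] at hsum
    ext l
    rcases eq_or_ne l i with rfl | h
    · simp [hsum]
    · simp [Finsupp.single_apply, Ne.symm h, hno l h]
  rw [eval_ept hge i] at h0
  rw [hαi] at hα
  exact MvPolynomial.mem_support_iff.mp hα h0

lemma pointIdeal_ept_pow_le (i : σ) (b : ℕ) :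
    (pointIdeal (ept k i)) ^ b ≤ wIdeal k i b := by
  induction b with
  | zero => intro f _ α hα; exact Nat.zero_le _
  | succ b ih =>
    rw [pow_succ]
    refine Ideal.mul_le.mpr fun r hr s hs => ?_
    exact wIdeal_mul_le (ih hr) (pointIdeal_ept_le i hs)

lemma X_mem_pointIdeal_ept {i l : σ} (h : l ≠ i) : (X l : MvPolynomial σ k) ∈ pointIdeal (ept k i) :=
  Ideal.subset_span ⟨⟨1, isHomogeneous_X k l⟩, by simp [ept, h]⟩

lemma prod_pow_mem_pow {R : Type*} [CommRing R] (I : Ideal R) (s : Finset σ) (x : σ → R)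
    (a : σ → ℕ) (h : ∀ l ∈ s, x l ∈ I) : (∏ l ∈ s, x l ^ a l) ∈ I ^ (∑ l ∈ s, a l) := by
  classical
  induction s using Finset.induction_on with
  | empty => simp [Ideal.one_eq_top]
  | @insert j s hj ih =>
    rw [Finset.prod_insert hj, Finset.sum_insert hj, pow_add]
    exact Ideal.mul_mem_mul (Ideal.pow_mem_pow (h j (Finset.mem_insert_self j s)) _)
      (ih fun l hl => h l (Finset.mem_insert_of_mem hl))

lemma monomial_mem_pointIdeal_ept_pow {i : σ} {b : ℕ} {α : σ →₀ ℕ} (c : k)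
    (h : b ≤ wdeg i α) : monomial α c ∈ (pointIdeal (ept k i)) ^ b := by
  have h1 : (∏ l ∈ Finset.univ.erase i, (X l : MvPolynomial σ k) ^ α l) ∈
      (pointIdeal (ept k i)) ^ (wdeg i α) :=
    prod_pow_mem_pow _ _ _ _ fun l hl => X_mem_pointIdeal_ept (Finset.ne_of_mem_erase hl)
  have h2 : monomial α c = (C c * X i ^ α i) *
      ∏ l ∈ Finset.univ.erase i, (X l : MvPolynomial σ k) ^ α l := by
    rw [monomial_eq, Finsupp.prod_fintype _ _ (by intro l; simp),
      ← Finset.mul_prod_erase Finset.univ (fun l => (X l : MvPolynomial σ k) ^ α l)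
        (Finset.mem_univ i), ← mul_assoc]
  rw [h2]
  exact Ideal.pow_le_pow_right h (Ideal.mul_mem_left _ _ h1)

lemma mem_pointIdeal_ept_pow_of_wdeg {i : σ} {b : ℕ} {f : MvPolynomial σ k}
    (h : ∀ α ∈ f.support, b ≤ wdeg i α) : f ∈ (pointIdeal (ept k i)) ^ b := by
  rw [← support_sum_monomial_coeff f]
  exact Ideal.sum_mem _ fun α hα => monomial_mem_pointIdeal_ept_pow _ (h α hα)

end Stmt6

namespace Stmt6
set_option linter.unusedSectionVars false
variable {k : Type*} [Field k] {σ : Type*} [Fintype σ] [DecidableEq σ]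

lemma wdeg_single (i l : σ) (n : ℕ) : wdeg i (Finsupp.single l n) = if l = i then 0 else n := by
  rcases eq_or_ne l i with rfl | h
  · rw [if_pos rfl]
    refine Finset.sum_eq_zero fun t ht => ?_
    simp [Finsupp.single_apply, Ne.symm (Finset.ne_of_mem_erase ht)]
  · simp only [wdeg, Finsupp.single_apply, if_neg h]
    rw [Finset.sum_ite_eq (Finset.univ.erase i) l (fun _ => n)]
    simp [Finset.mem_erase, h]

lemma exists_single_of_sum_one {u : σ →₀ ℕ} (h : ∑ l, u l = 1) :
    ∃ l, u = Finsupp.single l 1 := by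
  have hex : ∃ l, u l ≠ 0 := by
    by_contra hno; push_neg at hno
    rw [Finset.sum_eq_zero fun l _ => hno l] at h; exact one_ne_zero h.symm
  obtain ⟨l, hl⟩ := hex
  refine ⟨l, ?_⟩
  have h1 : u l + ∑ t ∈ Finset.univ.erase l, u t = 1 := by
    rw [Finset.add_sum_erase _ _ (Finset.mem_univ l)]; exact h
  have hul : u l = 1 := by omega
  have hz : ∑ t ∈ Finset.univ.erase l, u t = 0 := by omega
  have hrest : ∀ t, t ≠ l → u t = 0 := fun t ht =>
    Finset.sum_eq_zero_iff.mp hz t (Finset.mem_erase.mpr ⟨ht, Finset.mem_univ t⟩)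
  ext t
  rcases eq_or_ne t l with rfl | h'
  · simp [hul]
  · simp [Finsupp.single_apply, Ne.symm h', hrest t h']

lemma wcancel_linear {i : σ} {b : ℕ} {ℓ H : MvPolynomial σ k}
    (hl : ℓ.IsHomogeneous 1) (hle : eval (ept k i) ℓ ≠ 0)
    (h : ∀ α ∈ (ℓ * H).support, b ≤ wdeg i α) :
    ∀ α ∈ H.support, b ≤ wdeg i α := by
  by_contra hno
  push_neg at hno
  obtain ⟨β₀, hβ₀, hwβ₀⟩ := hno
  set S := H.support.filter (fun γ => wdeg i γ < b) with hS
  have hSne : S.Nonempty := ⟨β₀, Finset.mem_filter.mpr ⟨hβ₀, hwβ₀⟩⟩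
  obtain ⟨β, hβS, hβmax⟩ := Finset.exists_max_image S (fun γ => γ i) hSne
  obtain ⟨hβ, hwβ⟩ := Finset.mem_filter.mp hβS
  have hkey : coeff (β + Finsupp.single i 1) (ℓ * H) = eval (ept k i) ℓ * coeff β H := by
    rw [coeff_mul]
    rw [Finset.sum_eq_single ((Finsupp.single i 1 : σ →₀ ℕ), β)]
    · rw [eval_ept hl i]
    · rintro ⟨u, v⟩ huv hne
      rw [Finset.HasAntidiagonal.mem_antidiagonal] at huv
      dsimp only at huv
      rcases eq_or_ne (coeff u ℓ) 0 with h0 | h0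
      · rw [h0, zero_mul]
      rcases eq_or_ne (coeff v H) 0 with h1 | h1
      · rw [h1, mul_zero]
      have hu1 : ∑ l, u l = 1 :=
        isHomog_degree hl (MvPolynomial.mem_support_iff.mpr h0)
      obtain ⟨l, rfl⟩ := exists_single_of_sum_one hu1
      by_cases hli : l = i
      · exfalso
        rw [hli] at huv
        have hv : v = β := by
          have h2 : Finsupp.single i 1 + v = Finsupp.single i 1 + β := by
            rw [huv, add_comm]
          exact add_left_cancel h2
        exact hne (by rw [hli, hv])
      · exfalso
        have hvi : v i = β i + 1 := by
          have := congrFun (congrArg (fun (x : σ →₀ ℕ) => (x : σ → ℕ)) huv) i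
          simp [Finsupp.single_apply, hli] at this
          simpa using this
        have hwv : wdeg i v + 1 = wdeg i β := by
          have := congrArg (wdeg i) huv
          rw [wdeg_add, wdeg_add, wdeg_single, wdeg_single, if_neg hli, if_pos rfl] at this
          omega
        have hvS : v ∈ S := Finset.mem_filter.mpr
          ⟨MvPolynomial.mem_support_iff.mpr h1, by omega⟩
        have := hβmax v hvS
        omega
    · intro hmem
      exfalso
      exact hmem (Finset.HasAntidiagonal.mem_antidiagonal.mpr (by rw [add_comm]))
  have hne0 : coeff (β + Finsupp.single i 1) (ℓ * H) ≠ 0 := by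
    rw [hkey]
    exact mul_ne_zero hle (MvPolynomial.mem_support_iff.mp hβ)
  have := h _ (MvPolynomial.mem_support_iff.mpr hne0)
  rw [wdeg_add, wdeg_single, if_pos rfl] at this
  omega

/-- `P` can be cancelled from weight bounds -/
def Cancels (i : σ) (b : ℕ) (P : MvPolynomial σ k) : Prop :=
  ∀ H : MvPolynomial σ k, (∀ α ∈ (P * H).support, b ≤ wdeg i α) →
    ∀ α ∈ H.support, b ≤ wdeg i α

lemma cancels_mul {i : σ} {b : ℕ} {P Q : MvPolynomial σ k}
    (hP : Cancels i b P) (hQ : Cancels i b Q) : Cancels i b (P * Q) := fun H h =>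
  hQ H (hP (Q * H) (by rwa [← mul_assoc]))

lemma cancels_one (i : σ) (b : ℕ) : Cancels i b (1 : MvPolynomial σ k) := fun H h => by
  simpa using h

lemma cancels_pow {i : σ} {b : ℕ} {P : MvPolynomial σ k} (hP : Cancels i b P) (n : ℕ) :
    Cancels i b (P ^ n) := by
  induction n with
  | zero => simpa [pow_zero] using cancels_one i b
  | succ n ih => rw [pow_succ]; exact cancels_mul ih hP

end Stmt6

namespace Stmt6
set_option linter.unusedSectionVars false
variable {k : Type*} [Field k] {σ : Type*} [Fintype σ] [DecidableEq σ]

lemma psi_X (M : Matrix σ σ k) (l : σ) : psi M (X l) = ∑ t, C (M l t) * X t := by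
  simp [psi]

lemma psi_X_isHomogeneous (M : Matrix σ σ k) (l : σ) : (psi M (X l)).IsHomogeneous 1 := by
  rw [psi_X]
  exact IsHomogeneous.sum _ _ _ fun t _ => by
    simpa using (isHomogeneous_C σ (M l t)).mul (isHomogeneous_X k t)

lemma cancel_monomial_pow [Nonempty σ] {q : σ → k} (hq : ∀ l, q l ≠ 0) {b : ℕ}
    {u : σ →₀ ℕ} {G : MvPolynomial σ k}
    (h : monomial u 1 * G ∈ pointIdeal q ^ b) : G ∈ pointIdeal q ^ b := by
  obtain ⟨i₀⟩ := ‹Nonempty σ›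
  set M := (1 : Matrix σ σ k).updateCol i₀ q with hMdef
  have hMe : M.mulVec (ept k i₀) = q := by
    ext l
    simp only [Matrix.mulVec, dotProduct, ept, M, Matrix.updateCol_apply,
      mul_ite, mul_one, mul_zero]
    rw [Finset.sum_ite_eq' Finset.univ i₀]
    simp
  have hdet : M.det = q i₀ := by
    have h1 := Matrix.cramer_apply (1 : Matrix σ σ k) q i₀
    rw [Matrix.cramer_one] at h1
    simpa [hMdef] using h1.symm
  have hU : IsUnit M.det := by rw [hdet]; exact (hq i₀).isUnit
  have h1 : psi M (monomial u 1 * G) ∈ pointIdeal (ept k i₀) ^ b :=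
    psi_pointIdeal_pow M 1 (by rw [hMe, one_smul]) h
  rw [map_mul] at h1
  have hw1 : ∀ α ∈ (psi M (monomial u 1) * psi M G).support, b ≤ wdeg i₀ α :=
    pointIdeal_ept_pow_le i₀ b h1
  have hcan : Cancels i₀ b (psi M (monomial u 1)) := by
    have hmon : (monomial u (1 : k)) = ∏ l, X l ^ u l := by
      rw [monomial_eq, Finsupp.prod_fintype _ _ (by intro l; simp)]
      simp
    rw [hmon, map_prod]
    refine Finset.prod_induction _ _ (fun a b => cancels_mul) (cancels_one i₀ b) fun l _ => ?_
    rw [map_pow]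
    refine cancels_pow (fun H hH => wcancel_linear (psi_X_isHomogeneous M l) ?_ hH) _
    rw [eval_psi, hMe]
    simpa using hq l
  have h2 : psi M G ∈ pointIdeal (ept k i₀) ^ b :=
    mem_pointIdeal_ept_pow_of_wdeg (hcan (psi M G) hw1)
  have hMq : M⁻¹.mulVec q = ept k i₀ := by
    rw [← hMe, Matrix.mulVec_mulVec, Matrix.nonsing_inv_mul _ hU, Matrix.one_mulVec]
  have h3 : psi M⁻¹ (psi M G) ∈ pointIdeal q ^ b :=
    psi_pointIdeal_pow M⁻¹ 1 (by rw [hMq, one_smul]) h2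
  rwa [psi_psi, Matrix.mul_nonsing_inv _ hU, psi_one] at h3

end Stmt6

namespace Stmt6
set_option linter.unusedSectionVars false
variable {k : Type*} [Field k]

/-- the standard Cremona involution on points -/
def phiPt {σ : Type*} [Fintype σ] [DecidableEq σ] (w : σ → k) : σ → k :=
  fun i => ∏ l ∈ Finset.univ.erase i, w l

/-- the standard Cremona substitution on polynomials -/
noncomputable def psiPhi (k : Type*) [Field k] {σ : Type*} [Fintype σ] [DecidableEq σ] :
    MvPolynomial σ k →ₐ[k] MvPolynomial σ k :=
  aeval (fun i => ∏ l ∈ Finset.univ.erase i, X l)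

variable {σ : Type*} [Fintype σ] [DecidableEq σ]

lemma monomial_prod (s : Finset σ) (g : σ → (σ →₀ ℕ)) :
    ∏ l ∈ s, monomial (g l) (1 : k) = monomial (∑ l ∈ s, g l) 1 := by
  classical
  induction s using Finset.induction_on with
  | empty => simp
  | @insert j s hj ih =>
    rw [Finset.prod_insert hj, Finset.sum_insert hj, ih, monomial_mul, mul_one]

lemma psiPhi_X (i : σ) : psiPhi k (X i) =
    monomial (∑ l ∈ Finset.univ.erase i, Finsupp.single l 1) (1 : k) := by
  rw [psiPhi, aeval_X, ← monomial_prod]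
  exact Finset.prod_congr rfl fun l _ => by rw [X]

lemma eval_psiPhi (w : σ → k) (f : MvPolynomial σ k) :
    eval w (psiPhi k f) = eval (phiPt w) f := by
  have h : (eval w).comp ((psiPhi k : MvPolynomial σ k →ₐ[k] MvPolynomial σ k) :
      MvPolynomial σ k →+* MvPolynomial σ k) = eval (phiPt w) := by
    apply ringHom_ext
    · intro r; simp [psiPhi]
    · intro i; simp [psiPhi, phiPt]
  exact RingHom.congr_fun h f

lemma psiPhi_isHomogeneous {f : MvPolynomial σ k} {e : ℕ} (hf : f.IsHomogeneous e) :
    (psiPhi k f).IsHomogeneous ((Fintype.card σ - 1) * e) := by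
  refine isHomogeneous_aeval _ _ (fun i => ?_) hf
  have := IsHomogeneous.prod (Finset.univ.erase i) (fun l => (X l : MvPolynomial σ k))
    (fun _ => 1) (fun l _ => isHomogeneous_X k l)
  simpa [Finset.card_erase_of_mem] using this

lemma nu_apply (i l : σ) :
    (∑ t ∈ Finset.univ.erase i, Finsupp.single t (1:ℕ)) l = if l = i then 0 else 1 := by
  rw [Finset.sum_apply']
  rcases eq_or_ne l i with rfl | h
  · rw [if_pos rfl]
    exact Finset.sum_eq_zero fun t ht =>
      Finsupp.single_eq_of_ne' (Finset.ne_of_mem_erase ht)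
  · rw [if_neg h]
    simp only [Finsupp.single_apply]
    rw [Finset.sum_ite_eq' (Finset.univ.erase i) l (fun _ => 1)]
    simp [Finset.mem_erase, h]

lemma psiPhi_monomial {d : ℕ} {α : σ →₀ ℕ} (hα : ∑ l, α l = d) (c : k) :
    psiPhi k (monomial α c) =
      monomial (Finsupp.equivFunOnFinite.symm fun l => d - α l) c := by
  rw [psiPhi, aeval_monomial, MvPolynomial.algebraMap_eq]
  have hX : ∀ i : σ, (∏ l ∈ Finset.univ.erase i, (X l : MvPolynomial σ k)) =
      monomial (∑ l ∈ Finset.univ.erase i, Finsupp.single l 1) (1:k) := by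
    intro i
    rw [← monomial_prod]
    exact Finset.prod_congr rfl fun l _ => rfl
  have h1 : (α.prod fun i n => (∏ l ∈ Finset.univ.erase i, (X l : MvPolynomial σ k)) ^ n) =
      monomial (Finsupp.equivFunOnFinite.symm fun l => d - α l) 1 := by
    rw [Finsupp.prod_fintype _ _ (by intro i; simp)]
    have h2 : ∀ i ∈ Finset.univ, (∏ l ∈ Finset.univ.erase i, (X l : MvPolynomial σ k)) ^ α i
        = monomial (α i • ∑ l ∈ Finset.univ.erase i, Finsupp.single l 1) (1:k) := by
      intro i _
      rw [hX i, monomial_pow, one_pow]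
    rw [Finset.prod_congr rfl h2, monomial_prod]
    have hAB : (∑ i, α i • ∑ l ∈ Finset.univ.erase i, Finsupp.single l (1:ℕ)) =
        Finsupp.equivFunOnFinite.symm fun l => d - α l := by
      ext l
      rw [Finsupp.finset_sum_apply]
      have h3 : ∀ i : σ, (α i • ∑ t ∈ Finset.univ.erase i, Finsupp.single t (1:ℕ)) l
          = α i * (if l = i then 0 else 1) := by
        intro i
        rw [Finsupp.smul_apply, nu_apply, smul_eq_mul]
      rw [Finset.sum_congr rfl fun i _ => h3 i]
      have h4 : ∑ i, α i * (if l = i then 0 else 1) = wdeg l α := by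
        rw [← Finset.add_sum_erase _ _ (Finset.mem_univ l), if_pos rfl, mul_zero, zero_add]
        rw [wdeg]
        refine Finset.sum_congr rfl fun t ht => ?_
        rw [if_neg (Ne.symm (Finset.ne_of_mem_erase ht)), mul_one]
      rw [h4]
      have h5 := sum_eq_add_wdeg l α
      rw [hα] at h5
      simp only [Finsupp.equivFunOnFinite_symm_apply_apply]
      omega
    rw [hAB]
  rw [h1, C_mul_monomial, mul_one]

end Stmt6

namespace Stmt6
set_option linter.unusedSectionVars false
variable {k : Type*} [Field k]

lemma cremona_step (mv : Fin 4 → ℤ) (c : ℤ) (d : ℕ)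
    (hc : c = 2 * (d : ℤ) - ∑ i, mv i)
    {F : MvPolynomial (Fin 4) k} (hF0 : F ≠ 0) (hFd : F.IsHomogeneous d)
    (h4 : ∀ i, F ∈ pointIdeal (ept k i) ^ (mv i).toNat) :
    ∃ (G : MvPolynomial (Fin 4) k) (t : ℕ), (t : ℤ) = (d : ℤ) + c ∧ G ≠ 0 ∧
      G.IsHomogeneous t ∧
      (∀ i, G ∈ pointIdeal (ept k i) ^ (mv i + c).toNat) ∧
      (∀ (w : Fin 4 → k) (b : ℕ), (∀ l, w l ≠ 0) →
        F ∈ pointIdeal (phiPt w) ^ b → G ∈ pointIdeal w ^ b) := by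
  have hbound : ∀ i, ∀ α ∈ F.support, (mv i).toNat ≤ wdeg i α :=
    fun i => pointIdeal_ept_pow_le i _ (h4 i)
  have hsum : ∀ α ∈ F.support, ∑ l, α l = d := fun α hα => isHomog_degree hFd hα
  set τ : (Fin 4 →₀ ℕ) → (Fin 4 →₀ ℕ) :=
    fun α => Finsupp.equivFunOnFinite.symm fun i => ((d : ℤ) - mv i - α i).toNat with hτ
  have key : ∀ α ∈ F.support, ∀ i, ((τ α) i : ℤ) = (d : ℤ) - mv i - α i := by
    intro α hα i
    have h1 := hbound i α hα
    have h2 := sum_eq_add_wdeg i α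
    rw [hsum α hα] at h2
    simp only [hτ, Finsupp.equivFunOnFinite_symm_apply_apply]
    omega
  have hTsum : ∀ α ∈ F.support, (∑ i, ((τ α) i : ℤ)) = (d : ℤ) + c := by
    intro α hα
    rw [Finset.sum_congr rfl fun i (_ : i ∈ Finset.univ) => key α hα i]
    have h2 : (∑ i, (α i : ℤ)) = (d : ℤ) := by
      rw [← Nat.cast_sum, hsum α hα]
    rw [Finset.sum_sub_distrib, Finset.sum_sub_distrib, h2, hc]
    rw [Finset.sum_const, Finset.card_univ]
    simp only [Fintype.card_fin, nsmul_eq_mul]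
    ring
  obtain ⟨α₀, hα₀⟩ := MvPolynomial.support_nonempty.mpr hF0
  set t := ((d : ℤ) + c).toNat with htdef
  have htZ : (t : ℤ) = (d : ℤ) + c := by
    rw [htdef, Int.toNat_of_nonneg]
    rw [← hTsum α₀ hα₀]
    exact Finset.sum_nonneg fun i _ => Int.natCast_nonneg _
  have hτdeg : ∀ α ∈ F.support, (τ α).degree = t := by
    intro α hα
    have h1 := hTsum α hα
    rw [degree_eq_sum]
    have h2 : ((∑ i, (τ α) i : ℕ) : ℤ) = (t : ℤ) := by
      rw [htZ, ← h1, Nat.cast_sum]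
    exact_mod_cast h2
  set G := ∑ α ∈ F.support, monomial (τ α) (coeff α F) with hGdef
  have hGcoeff : ∀ α ∈ F.support, coeff (τ α) G = coeff α F := by
    intro α hα
    rw [hGdef, MvPolynomial.coeff_sum]
    rw [Finset.sum_eq_single α]
    · rw [coeff_monomial, if_pos rfl]
    · intro β hβ hne
      rw [coeff_monomial, if_neg]
      intro heq
      apply hne
      ext i
      have h1 := key β hβ i
      have h2 := key α hα i
      rw [heq] at h1
      omega
    · exact fun h => absurd hα h
  have hG0 : G ≠ 0 := by
    intro h
    apply MvPolynomial.mem_support_iff.mp hα₀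
    rw [← hGcoeff α₀ hα₀, h, coeff_zero]
  have hGhom : G.IsHomogeneous t :=
    IsHomogeneous.sum _ _ _ fun α hα => isHomogeneous_monomial _ (hτdeg α hα)
  have hGept : ∀ i, G ∈ pointIdeal (ept k i) ^ (mv i + c).toNat := by
    intro i
    refine Ideal.sum_mem _ fun α hα => monomial_mem_pointIdeal_ept_pow _ ?_
    rw [Int.toNat_le]
    have h1 := sum_eq_add_wdeg i (τ α)
    have h3 : ((∑ l, (τ α) l : ℕ) : ℤ) = (d : ℤ) + c := by
      rw [Nat.cast_sum]; exact hTsum α hα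
    have h4 := key α hα i
    omega
  have hW : ∀ (w : Fin 4 → k) (b : ℕ), (∀ l, w l ≠ 0) →
      F ∈ pointIdeal (phiPt w) ^ b → G ∈ pointIdeal w ^ b := by
    intro w b hw hFw
    have hpF : psiPhi k F ∈ pointIdeal w ^ b :=
      pointIdeal_pow_map (psiPhi k) (fun g e hge => ⟨_, psiPhi_isHomogeneous hge⟩)
        (phiPt w) w (fun g e hge h0 => by rw [eval_psiPhi, h0]) hFw
    set upl : Fin 4 →₀ ℕ := Finsupp.equivFunOnFinite.symm fun i => (mv i).toNat with hupl
    set spl : Fin 4 →₀ ℕ := Finsupp.equivFunOnFinite.symm fun i => (-(mv i)).toNat with hspl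
    have hid : monomial upl 1 * G = monomial spl 1 * psiPhi k F := by
      have hpsiF : psiPhi k F = ∑ α ∈ F.support,
          monomial (Finsupp.equivFunOnFinite.symm fun l => d - α l) (coeff α F) := by
        conv_lhs => rw [← support_sum_monomial_coeff F]
        rw [map_sum]
        exact Finset.sum_congr rfl fun α hα => psiPhi_monomial (hsum α hα) _
      rw [hpsiF, hGdef, Finset.mul_sum, Finset.mul_sum]
      refine Finset.sum_congr rfl fun α hα => ?_
      have hexp : upl + τ α = spl + (Finsupp.equivFunOnFinite.symm fun l => d - α l) := by
        ext i
        have h1 := key α hα i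
        have h2 := sum_eq_add_wdeg i α
        rw [hsum α hα] at h2
        simp only [Finsupp.add_apply, hupl, hspl,
          Finsupp.equivFunOnFinite_symm_apply_apply]
        omega
      rw [monomial_mul, monomial_mul, hexp]
    have hmem : monomial upl 1 * G ∈ pointIdeal w ^ b := by
      rw [hid]; exact Ideal.mul_mem_left _ _ hpF
    exact cancel_monomial_pow hw hmem
  exact ⟨G, t, htZ, hG0, hGhom, hGept, hW⟩

end Stmt6

namespace Stmt6
set_option linter.unusedSectionVars false
variable {k : Type*} [Field k] {n : ℕ}

/-- polynomial ring in the coordinates of a tuple of points -/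
abbrev P2 (k : Type*) [Field k] (n : ℕ) := MvPolynomial (Fin (4 + n) × Fin 4) k

def Amat (p : Fin (4 + n) → Fin 4 → k) : Matrix (Fin 4) (Fin 4) k :=
  fun r i => p (Fin.castAdd n i) r

def qpt (p : Fin (4 + n) → Fin 4 → k) (j : Fin n) : Fin 4 → k := p (Fin.natAdd 4 j)

def upt (p : Fin (4 + n) → Fin 4 → k) (j : Fin n) : Fin 4 → k :=
  (Amat p).adjugate.mulVec (qpt p j)

def rk (p : Fin (4 + n) → Fin 4 → k) : Fin (4 + n) → Fin 4 → k :=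
  Fin.append (fun i => ept k i) (fun j => phiPt (upt p j))

def rhatp (p : Fin (4 + n) → Fin 4 → k) (Cm : Matrix (Fin 4) (Fin 4) k)
    (lam : Fin (4 + n) → k) : Fin (4 + n) → Fin 4 → k :=
  fun j => lam j • Cm.mulVec (rk p j)

noncomputable def ApolyM (k : Type*) [Field k] (n : ℕ) : Matrix (Fin 4) (Fin 4) (P2 k n) :=
  fun r i => X (Fin.castAdd n i, r)

noncomputable def qpoly (j : Fin n) : Fin 4 → P2 k n := fun r => X (Fin.natAdd 4 j, r)

noncomputable def upoly (j : Fin n) : Fin 4 → P2 k n :=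
  (ApolyM k n).adjugate.mulVec (qpoly j)

noncomputable def wpoly (j : Fin n) : Fin 4 → P2 k n :=
  fun i => ∏ l ∈ Finset.univ.erase i, upoly j l

noncomputable def rpoly : Fin (4 + n) → Fin 4 → P2 k n :=
  Fin.append (fun i r => C (ept k i r)) wpoly

noncomputable def Dpoly (k : Type*) [Field k] (n : ℕ) : P2 k n :=
  (ApolyM k n).det * ∏ j, ∏ i, upoly j i

noncomputable def gpoly (f : P2 k n) (Cm : Matrix (Fin 4) (Fin 4) k)
    (lam : Fin (4 + n) → k) : P2 k n :=
  aeval (fun q : Fin (4 + n) × Fin 4 => C (lam q.1) * ∑ t, C (Cm q.2 t) * rpoly q.1 t) f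

section evals
variable (p : Fin (4 + n) → Fin 4 → k)

lemma ev_Amat : ((ApolyM k n).map (eval fun q : Fin (4 + n) × Fin 4 => p q.1 q.2)) = Amat p := by
  ext r i; simp [ApolyM, Amat]

lemma ev_det : (eval fun q : Fin (4 + n) × Fin 4 => p q.1 q.2) (ApolyM k n).det =
    (Amat p).det := by
  rw [RingHom.map_det, ← ev_Amat p]
  rfl

lemma ev_upoly (j : Fin n) (l : Fin 4) :
    (eval fun q : Fin (4 + n) × Fin 4 => p q.1 q.2) (upoly j l) = upt p j l := by
  have hadj : ∀ a b, (eval fun q : Fin (4 + n) × Fin 4 => p q.1 q.2)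
      ((ApolyM k n).adjugate a b) = (Amat p).adjugate a b := by
    intro a b
    have h1 := RingHom.map_adjugate (eval fun q : Fin (4 + n) × Fin 4 => p q.1 q.2) (ApolyM k n)
    rw [RingHom.mapMatrix_apply, RingHom.mapMatrix_apply, ev_Amat p] at h1
    exact congrFun (congrFun (congrArg (fun M => (M : Matrix (Fin 4) (Fin 4) k)) h1) a) b
  simp only [upoly, upt, Matrix.mulVec, dotProduct, map_sum, map_mul]
  refine Finset.sum_congr rfl fun t _ => ?_
  rw [hadj]
  simp [qpoly, qpt]

end evals
end Stmt6

namespace Stmt6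
set_option linter.unusedSectionVars false
variable {k : Type*} [Field k] {n : ℕ}

section evals2
variable (p : Fin (4 + n) → Fin 4 → k)

lemma rk_left (i : Fin 4) : rk p (Fin.castAdd n i) = ept k i := by
  rw [rk, Fin.append_left]

lemma rk_right (j : Fin n) : rk p (Fin.natAdd 4 j) = phiPt (upt p j) := by
  rw [rk, Fin.append_right]

lemma ev_rpoly (j : Fin (4 + n)) (tt : Fin 4) :
    (eval fun q : Fin (4 + n) × Fin 4 => p q.1 q.2) (rpoly j tt) = rk p j tt := by
  induction j using Fin.addCases with
  | left i =>
    rw [rk_left, show (rpoly : Fin (4+n) → Fin 4 → P2 k n) (Fin.castAdd n i) =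
      fun r => C (ept k i r) from Fin.append_left _ _ i]
    simp
  | right jj =>
    rw [rk_right, show (rpoly : Fin (4+n) → Fin 4 → P2 k n) (Fin.natAdd 4 jj) =
      wpoly jj from Fin.append_right _ _ jj]
    rw [wpoly, phiPt, map_prod]
    exact Finset.prod_congr rfl fun l _ => ev_upoly p jj l

lemma ev_Dpoly : (eval fun q : Fin (4 + n) × Fin 4 => p q.1 q.2) (Dpoly k n) =
    (Amat p).det * ∏ j, ∏ i, upt p j i := by
  rw [Dpoly, map_mul, ev_det, map_prod]
  congr 1
  refine Finset.prod_congr rfl fun j _ => ?_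
  rw [map_prod]
  exact Finset.prod_congr rfl fun i _ => ev_upoly p j i

lemma ev_gpoly (f : P2 k n) (Cm : Matrix (Fin 4) (Fin 4) k) (lam : Fin (4 + n) → k) :
    (eval fun q : Fin (4 + n) × Fin 4 => p q.1 q.2) (gpoly f Cm lam) =
      eval (fun q : Fin (4 + n) × Fin 4 => rhatp p Cm lam q.1 q.2) f := by
  have h : ((eval fun q : Fin (4 + n) × Fin 4 => p q.1 q.2).comp
      ((aeval (fun q : Fin (4 + n) × Fin 4 => C (lam q.1) * ∑ t, C (Cm q.2 t) * rpoly q.1 t) :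
        P2 k n →ₐ[k] P2 k n) : P2 k n →+* P2 k n)) =
      eval (fun q : Fin (4 + n) × Fin 4 => rhatp p Cm lam q.1 q.2) := by
    apply ringHom_ext
    · intro r; simp
    · intro q
      rw [RingHom.comp_apply]
      have h1 : ((aeval (fun q : Fin (4 + n) × Fin 4 =>
          C (lam q.1) * ∑ t, C (Cm q.2 t) * rpoly q.1 t) :
          P2 k n →ₐ[k] P2 k n) : P2 k n →+* P2 k n) (X q) =
          C (lam q.1) * ∑ t, C (Cm q.2 t) * rpoly q.1 t := by
        simp
      rw [h1, map_mul, map_sum, eval_C, eval_X]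
      have h2 : ∀ t, (eval fun q : Fin (4 + n) × Fin 4 => p q.1 q.2)
          (C (Cm q.2 t) * rpoly q.1 t) = Cm q.2 t * rk p q.1 t := by
        intro t; rw [map_mul, eval_C, ev_rpoly]
      rw [Finset.sum_congr rfl fun t _ => h2 t]
      simp [rhatp, Matrix.mulVec, dotProduct]
  exact RingHom.congr_fun h f

end evals2
end Stmt6

namespace Stmt6
set_option linter.unusedSectionVars false
variable {k : Type*} [Field k] {n : ℕ}

lemma mulVec_ept (M : Matrix (Fin 4) (Fin 4) k) (i : Fin 4) :
    M.mulVec (ept k i) = fun r => M r i := by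
  funext r
  simp only [Matrix.mulVec, dotProduct, ept, mul_ite, mul_one, mul_zero]
  rw [Finset.sum_ite_eq' Finset.univ i (fun t => M r t)]
  simp

lemma ne_zero_of_mulVec {M : Matrix (Fin 4) (Fin 4) k} (hdet : M.det ≠ 0)
    {v : Fin 4 → k} (hv : v ≠ 0) : M.mulVec v ≠ 0 := by
  intro h
  apply hv
  have h1 : M.adjugate.mulVec (M.mulVec v) = 0 := by rw [h]; simp [Matrix.mulVec_zero]
  rw [Matrix.mulVec_mulVec, Matrix.adjugate_mul, Matrix.smul_mulVec,
    Matrix.one_mulVec] at h1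
  have := smul_eq_zero.mp h1
  tauto

lemma phiPt_ne_zero {v : Fin 4 → k} (hv : ∀ l, v l ≠ 0) (i : Fin 4) : phiPt v i ≠ 0 :=
  Finset.prod_ne_zero_iff.mpr fun l _ => hv l

lemma phiPt_phiPt {v : Fin 4 → k} (hv : ∀ l, v l ≠ 0) :
    phiPt (phiPt v) = ((∏ l, v l) ^ 2) • v := by
  have hP : (∏ l, v l) ≠ 0 := Finset.prod_ne_zero_iff.mpr fun l _ => hv l
  have hPi : ∀ i, phiPt v i = (∏ l, v l) / v i := by
    intro i
    rw [eq_div_iff (hv i), phiPt, mul_comm, ← Finset.mul_prod_erase _ _ (Finset.mem_univ i),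
      mul_comm]
  funext i
  rw [Pi.smul_apply, smul_eq_mul]
  rw [show phiPt (phiPt v) i = ∏ l ∈ Finset.univ.erase i, phiPt v l from rfl]
  rw [Finset.prod_congr rfl fun l _ => hPi l, Finset.prod_div_distrib, Finset.prod_const,
    Finset.card_erase_of_mem (Finset.mem_univ i), Finset.card_univ, Fintype.card_fin]
  rw [show ∏ l ∈ Finset.univ.erase i, v l = phiPt v i from rfl, hPi i]
  field_simp

lemma exists_eval_ne [Infinite k] {σ : Type*} {T : MvPolynomial σ k} (hT : T ≠ 0) :
    ∃ x : σ → k, eval x T ≠ 0 := by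
  by_contra h
  push_neg at h
  exact hT (MvPolynomial.funext fun x => by rw [h x, map_zero])

end Stmt6


open Stmt6

/-- Cremona transformation in `ℙ³`: if for general points the fat points ideal
`I(m₁,m₂,m₃,m₄,m̄)` contains a nonzero form of degree `d`, then for general points
`I(m₁+c, m₂+c, m₃+c, m₄+c, m̄)` contains a nonzero form of degree `d + c`, where
`c = 2d - m₁ - m₂ - m₃ - m₄`. -/
theorem statement6 (k : Type*) [Field k] [CharZero k] (n : ℕ)
    (m₁ m₂ m₃ m₄ : ℤ) (mbar : Fin n → ℤ) (d : ℕ) (c : ℤ)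
    (hc : c = 2 * (d : ℤ) - m₁ - m₂ - m₃ - m₄)
    (hyp : Generic k 3 (4 + n) (fun p =>
      ∃ f ∈ fatIdealZ p (Fin.append ![m₁, m₂, m₃, m₄] mbar),
        f ≠ 0 ∧ f.IsHomogeneous d)) :
    Generic k 3 (4 + n) (fun p =>
      ∃ f ∈ fatIdealZ p (Fin.append ![m₁ + c, m₂ + c, m₃ + c, m₄ + c] mbar),
        f ≠ 0 ∧ ∃ t : ℕ, (t : ℤ) = (d : ℤ) + c ∧ f.IsHomogeneous t) := by
  have hinf : Infinite k := Infinite.of_injective (fun n : ℕ => (n : k)) Nat.cast_injective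
  obtain ⟨S, ⟨p0, hp0ne, f0, hf0S, hf0⟩, Hmain⟩ := hyp
  set mv4 : Fin 4 → ℤ := ![m₁, m₂, m₃, m₄] with hmv4def
  have hsum4 : ∑ i, mv4 i = m₁ + m₂ + m₃ + m₄ := by
    rw [Fin.sum_univ_four]; rfl
  have hc' : c = 2 * (d : ℤ) - ∑ i, mv4 i := by rw [hsum4]; omega
  have hplus : ∀ i : Fin 4, (![m₁ + c, m₂ + c, m₃ + c, m₄ + c] : Fin 4 → ℤ) i = mv4 i + c := by
    intro i; fin_cases i <;> rfl
  refine ⟨{ h : P2 k n | ∃ f ∈ S, ∃ Cm : Matrix (Fin 4) (Fin 4) k, IsUnit Cm.det ∧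
      ∃ lam : Fin (4 + n) → k, (∀ j, lam j ≠ 0) ∧ h = Dpoly k n * gpoly f Cm lam }, ?_, ?_⟩
  · -- nonemptiness
    have hf0ne : f0 ≠ 0 := by rintro rfl; exact hf0 (map_zero _)
    have hDne : (Dpoly k n) ≠ 0 := by
      intro h
      set p1 : Fin (4 + n) → Fin 4 → k :=
        fun j => Fin.addCases (fun i => ept k i) (fun _ _ => 1) j with hp1
      have h1 := congrArg (eval fun q : Fin (4 + n) × Fin 4 => p1 q.1 q.2) h
      rw [ev_Dpoly, map_zero] at h1
      have hA1 : Amat p1 = 1 := by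
        ext r i
        show p1 (Fin.castAdd n i) r = _
        have h2 : p1 (Fin.castAdd n i) = ept k i := Fin.addCases_left i
        rw [h2]
        simp [ept, Matrix.one_apply]
      have hu1 : ∀ (j : Fin n) (l : Fin 4), upt p1 j l = 1 := by
        intro j l
        have hq1 : qpt p1 j = fun _ => 1 := by
          rw [qpt, hp1]
          exact Fin.addCases_right j
        rw [upt, hA1, Matrix.adjugate_one, hq1, Matrix.one_mulVec]
      rw [hA1, Matrix.det_one] at h1
      simp [hu1] at h1
    have hTne : f0 * Dpoly k n ≠ 0 := mul_ne_zero hf0ne hDne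
    obtain ⟨x, hx⟩ := exists_eval_ne hTne
    rw [map_mul] at hx
    set ps : Fin (4 + n) → Fin 4 → k := fun j r => x (j, r) with hps
    have hxps : (fun q : Fin (4 + n) × Fin 4 => ps q.1 q.2) = x := by
      funext q; rfl
    have hf0x : eval (fun q : Fin (4 + n) × Fin 4 => ps q.1 q.2) f0 ≠ 0 := by
      rw [hxps]; exact fun h => hx (by rw [h, zero_mul])
    have hDx : eval (fun q : Fin (4 + n) × Fin 4 => ps q.1 q.2) (Dpoly k n) ≠ 0 := by
      rw [hxps]; exact fun h => hx (by rw [h, mul_zero])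
    rw [ev_Dpoly] at hDx
    set Cm := Amat ps with hCmdef
    have hdet : Cm.det ≠ 0 := fun h => hDx (by rw [h, zero_mul])
    have hupt : ∀ (j : Fin n) (l : Fin 4), upt ps j l ≠ 0 := by
      intro j l h
      apply hDx
      rw [mul_eq_zero]; right
      exact Finset.prod_eq_zero (Finset.mem_univ j)
        (Finset.prod_eq_zero (Finset.mem_univ l) h)
    set q' : Fin n → Fin 4 → k :=
      fun j => (Cm.det)⁻¹ • Cm.mulVec (phiPt (upt ps j)) with hq'def
    set p' : Fin (4 + n) → Fin 4 → k :=
      fun j => Fin.addCases (fun i => ps (Fin.castAdd n i)) q' j with hp'def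
    have hp'l : ∀ i : Fin 4, p' (Fin.castAdd n i) = ps (Fin.castAdd n i) := by
      intro i; rw [hp'def]; exact Fin.addCases_left i
    have hp'r : ∀ jj : Fin n, p' (Fin.natAdd 4 jj) = q' jj := by
      intro jj; rw [hp'def]; exact Fin.addCases_right jj
    have hA' : Amat p' = Cm := by
      ext r i
      show p' (Fin.castAdd n i) r = Cm r i
      rw [hp'l i, hCmdef]
      rfl
    have hu' : ∀ j, upt p' j = phiPt (upt ps j) := by
      intro j
      rw [upt, hA', show qpt p' j = q' j from hp'r j, hq'def]
      rw [Matrix.mulVec_smul, Matrix.mulVec_mulVec, Matrix.adjugate_mul,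
        Matrix.smul_mulVec, Matrix.one_mulVec, smul_smul,
        inv_mul_cancel₀ hdet, one_smul]
    have hPjne : ∀ j, (∏ l, upt ps j l) ≠ 0 :=
      fun j => Finset.prod_ne_zero_iff.mpr fun l _ => hupt j l
    set lam : Fin (4 + n) → k :=
      fun j => Fin.addCases (fun _ => 1)
        (fun jj => ((∏ l, upt ps jj l) ^ 2 * Cm.det)⁻¹) j with hlamdef
    have hlaml : ∀ i : Fin 4, lam (Fin.castAdd n i) = 1 := by
      intro i; rw [hlamdef]; exact Fin.addCases_left i
    have hlamr : ∀ jj : Fin n, lam (Fin.natAdd 4 jj) =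
        ((∏ l, upt ps jj l) ^ 2 * Cm.det)⁻¹ := by
      intro jj; rw [hlamdef]; exact Fin.addCases_right jj
    have hlamne : ∀ j, lam j ≠ 0 := by
      intro j
      induction j using Fin.addCases with
      | left i => rw [hlaml]; exact one_ne_zero
      | right jj =>
        rw [hlamr]
        exact inv_ne_zero (mul_ne_zero (pow_ne_zero _ (hPjne jj)) hdet)
    have hrhat : ∀ j, rhatp p' Cm lam j = ps j := by
      intro j
      induction j using Fin.addCases with
      | left i =>
        rw [rhatp, rk_left, hlaml, one_smul, mulVec_ept]
        funext r
        rw [hCmdef]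
        rfl
      | right jj =>
        rw [rhatp, rk_right, hu' jj, phiPt_phiPt (hupt jj), hlamr]
        rw [Matrix.mulVec_smul]
        rw [show upt ps jj = Cm.adjugate.mulVec (qpt ps jj) from rfl]
        rw [Matrix.mulVec_mulVec, Matrix.mul_adjugate, Matrix.smul_mulVec,
          Matrix.one_mulVec, smul_smul, smul_smul]
        rw [show qpt ps jj = ps (Fin.natAdd 4 jj) from rfl]
        have hX : ((∏ l : Fin 4, Cm.adjugate.mulVec (ps (Fin.natAdd 4 jj)) l) ^ 2 *
            Cm.det) ≠ 0 := mul_ne_zero (pow_ne_zero _ (hPjne jj)) hdet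
        rw [mul_assoc, inv_mul_cancel₀ hX, one_smul]
    have hp'ne : ∀ j, p' j ≠ 0 := by
      intro j
      induction j using Fin.addCases with
      | left i =>
        rw [hp'l i]
        have : ps (Fin.castAdd n i) = Cm.mulVec (ept k i) := by
          rw [mulVec_ept]
          funext r
          rw [hCmdef]; rfl
        rw [this]
        exact ne_zero_of_mulVec hdet (ept_ne_zero i)
      | right jj =>
        rw [hp'r jj, hq'def]
        refine smul_ne_zero (inv_ne_zero hdet) (ne_zero_of_mulVec hdet ?_)
        exact fun h => phiPt_ne_zero (hupt jj) 0 (congrFun h 0)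
    refine ⟨p', hp'ne, Dpoly k n * gpoly f0 Cm lam,
      ⟨f0, hf0S, Cm, hdet.isUnit, lam, hlamne, rfl⟩, ?_⟩
    rw [map_mul, ev_gpoly]
    refine mul_ne_zero ?_ ?_
    · rw [ev_Dpoly, hA']
      refine mul_ne_zero hdet (Finset.prod_ne_zero_iff.mpr fun j _ =>
        Finset.prod_ne_zero_iff.mpr fun l _ => ?_)
      rw [hu' j]
      exact phiPt_ne_zero (hupt j) l
    · have heq : (fun q : Fin (4 + n) × Fin 4 => rhatp p' Cm lam q.1 q.2) =
          (fun q : Fin (4 + n) × Fin 4 => ps q.1 q.2) := by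
        funext q; rw [hrhat]
      rw [heq]
      exact hf0x
  · -- main implication
    rintro p hpne ⟨h, ⟨f, hfS, Cm, hCm, lam, hlamne, rfl⟩, hev⟩
    rw [map_mul] at hev
    have hD : eval (fun q : Fin (4 + n) × Fin 4 => p q.1 q.2) (Dpoly k n) ≠ 0 :=
      fun h => hev (by rw [h, zero_mul])
    have hg : eval (fun q : Fin (4 + n) × Fin 4 => p q.1 q.2) (gpoly f Cm lam) ≠ 0 :=
      fun h => hev (by rw [h, mul_zero])
    rw [ev_Dpoly] at hD
    have hdet : (Amat p).det ≠ 0 := fun h => hD (by rw [h, zero_mul])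
    have hupt : ∀ (j : Fin n) (l : Fin 4), upt p j l ≠ 0 := by
      intro j l h
      apply hD
      rw [mul_eq_zero]; right
      exact Finset.prod_eq_zero (Finset.mem_univ j)
        (Finset.prod_eq_zero (Finset.mem_univ l) h)
    rw [ev_gpoly] at hg
    have hrkne : ∀ j, rk p j ≠ 0 := by
      intro j
      induction j using Fin.addCases with
      | left i => rw [rk_left]; exact ept_ne_zero i
      | right jj =>
        rw [rk_right]
        exact fun h => phiPt_ne_zero (hupt jj) 0 (congrFun h 0)
    have hCmdet : Cm.det ≠ 0 := by
      intro h; rw [h] at hCm; exact (not_isUnit_zero : ¬ IsUnit (0:k)) hCm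
    have hrne : ∀ j, rhatp p Cm lam j ≠ 0 := by
      intro j h0
      rw [rhatp] at h0
      rcases smul_eq_zero.mp h0 with h | h
      · exact hlamne j h
      · exact ne_zero_of_mulVec hCmdet (hrkne j) h
    obtain ⟨F, hFmem, hF0, hFd⟩ := Hmain (rhatp p Cm lam) hrne ⟨f, hfS, hg⟩
    simp only [fatIdealZ, Ideal.mem_iInf] at hFmem
    have hF1mem : ∀ j, psi Cm F ∈
        pointIdeal (rk p j) ^ ((Fin.append mv4 mbar j).toNat) := by
      intro j
      refine psi_pointIdeal_pow Cm ((lam j)⁻¹) ?_ (hFmem j)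
      rw [rhatp, inv_smul_smul₀ (hlamne j)]
    have hF10 : psi Cm F ≠ 0 := fun h => hF0 (psi_injective Cm hCm (by rw [h, map_zero]))
    have hF1d : (psi Cm F).IsHomogeneous d := psi_isHomogeneous Cm hFd
    have h4 : ∀ i : Fin 4, psi Cm F ∈ pointIdeal (ept k i) ^ (mv4 i).toNat := by
      intro i
      have h1 := hF1mem (Fin.castAdd n i)
      rwa [rk_left, Fin.append_left] at h1
    obtain ⟨G, t, htZ, hG0, hGhom, hGept, hW⟩ := cremona_step mv4 c d hc' hF10 hF1d h4
    have hGu : ∀ j : Fin n, G ∈ pointIdeal (upt p j) ^ (mbar j).toNat := by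
      intro j
      refine hW (upt p j) _ (hupt j) ?_
      have h1 := hF1mem (Fin.natAdd 4 j)
      rwa [rk_right, Fin.append_right] at h1
    have hAdjUnit : IsUnit (Amat p).adjugate.det := by
      rw [Matrix.det_adjugate]
      exact (hdet.isUnit).pow _
    refine ⟨psi (Amat p).adjugate G, ?_, ?_, t, htZ, psi_isHomogeneous _ hGhom⟩
    · simp only [fatIdealZ, Ideal.mem_iInf]
      intro j
      induction j using Fin.addCases with
      | left i =>
        have hmv' : Fin.append ![m₁ + c, m₂ + c, m₃ + c, m₄ + c] mbar (Fin.castAdd n i) =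
            mv4 i + c := by
          rw [Fin.append_left]; exact hplus i
        rw [hmv']
        refine psi_pointIdeal_pow (Amat p).adjugate ((Amat p).det) ?_ (hGept i)
        have h1 : (Amat p).mulVec (ept k i) = p (Fin.castAdd n i) := by
          rw [mulVec_ept]; funext r; rfl
        rw [← h1, Matrix.mulVec_mulVec, Matrix.adjugate_mul, Matrix.smul_mulVec,
          Matrix.one_mulVec]
      | right jj =>
        have hmv' : Fin.append ![m₁ + c, m₂ + c, m₃ + c, m₄ + c] mbar (Fin.natAdd 4 jj) =
            mbar jj := Fin.append_right _ _ _
        rw [hmv']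
        refine psi_pointIdeal_pow (Amat p).adjugate 1 ?_ (hGu jj)
        rw [one_smul]
        rfl
    · exact fun h => hG0 (psi_injective _ hAdjUnit (by rw [h, map_zero]))
end

section
/- For every integer m ≥ 1 and points p_1,…,p_8 in general position in P^3, the fat points ideal I(m^{×8}) = ∩_{j=1}^8 m_{p_j}^m contains no nonzero form of degree less than 2m; that is, α(I(m^{×8})) ≥ 2m. -/
open MvPolynomial Filter

namespace S8

variable {k : Type*}

/-- Taylor-type substitution `X i ↦ C (p i) + X i`. -/
noncomputable def tay [CommSemiring k] (p : Fin 4 → k) :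
    MvPolynomial (Fin 4) k →ₐ[k] MvPolynomial (Fin 4) k :=
  aeval fun i => C (p i) + X i

lemma tay_X [CommSemiring k] (p : Fin 4 → k) (i : Fin 4) :
    tay p (X i) = C (p i) + X i := aeval_X _ _

lemma tay_C [CommSemiring k] (p : Fin 4 → k) (c : k) :
    tay p (C c) = C c := by simp [tay, algebraMap_eq]

lemma tay_monomial [CommSemiring k] (p : Fin 4 → k) (d : Fin 4 →₀ ℕ) (c : k) :
    tay p (monomial d c) = C c * ∏ i, (C (p i) + X i) ^ d i := by
  rw [tay, aeval_monomial, algebraMap_eq, Finsupp.prod_pow]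

lemma tay_tay [CommSemiring k] (p q : Fin 4 → k) (f : MvPolynomial (Fin 4) k) :
    tay p (tay q f) = tay (fun i => p i + q i) f := by
  have : (tay p).comp (tay q) = tay (fun i => p i + q i) := by
    apply algHom_ext
    intro i
    simp [tay, add_comm, add_assoc, add_left_comm]
  calc tay p (tay q f) = ((tay p).comp (tay q)) f := rfl
  _ = _ := by rw [this]

lemma tay_injective [CommRing k] (p : Fin 4 → k) :
    Function.Injective (tay (k := k) p) := by
  intro f g h
  have h2 := congrArg (tay (fun i => - p i)) h
  rw [tay_tay, tay_tay] at h2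
  simp only [neg_add_cancel] at h2
  have : tay (k := k) (fun _ => (0:k)) = AlgHom.id k _ := by
    apply algHom_ext; intro i; simp [tay]
  rwa [this] at h2

lemma map_tay {S : Type*} [CommSemiring k] [CommSemiring S] (φ : k →+* S)
    (p : Fin 4 → k) (f : MvPolynomial (Fin 4) k) :
    map φ (tay p f) = tay (fun i => φ (p i)) (map φ f) := by
  induction f using MvPolynomial.induction_on with
  | C a => rw [tay_C, MvPolynomial.map_C, tay_C]
  | add f g hf hg => simp only [map_add, hf, hg]
  | mul_X f i hf =>
      rw [map_mul, map_mul, tay_X, hf, map_mul (MvPolynomial.map φ), map_add,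
        MvPolynomial.map_C, MvPolynomial.map_X, map_mul, tay_X]

lemma constantCoeff_tay [CommSemiring k] (p : Fin 4 → k) (f : MvPolynomial (Fin 4) k) :
    constantCoeff (tay p f) = eval p f := by
  induction f using MvPolynomial.induction_on with
  | C a => rw [tay_C]; simp
  | add f g hf hg => rw [map_add, map_add, hf, hg, map_add]
  | mul_X f i hf => rw [map_mul, tay_X, map_mul, map_mul, hf]; simp

def dsum (b : Fin 4 →₀ ℕ) : ℕ := ∑ i, b i

lemma dsum_finsuppSum (b : Fin 4 →₀ ℕ) : (b.sum fun _ e => e) = dsum b :=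
  Finsupp.sum_fintype _ _ fun _ => rfl

lemma dsum_add (a b : Fin 4 →₀ ℕ) : dsum (a + b) = dsum a + dsum b := by
  simp [dsum, Finset.sum_add_distrib]

lemma dsum_eq_zero_iff {b : Fin 4 →₀ ℕ} : dsum b = 0 ↔ b = 0 := by
  constructor
  · intro h
    ext i
    exact Finset.sum_eq_zero_iff.mp h i (Finset.mem_univ i)
  · intro h; subst h; simp [dsum]

lemma dsum_le_of_le {a b : Fin 4 →₀ ℕ} (h : a ≤ b) : dsum a ≤ dsum b :=
  Finset.sum_le_sum fun i _ => Finsupp.le_def.mp h i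

lemma eq_of_le_of_dsum_le {a b : Fin 4 →₀ ℕ} (h : a ≤ b) (h2 : dsum b ≤ dsum a) :
    a = b := by
  ext i
  have h3 := (Finset.sum_eq_sum_iff_of_le (fun i _ => Finsupp.le_def.mp h i)).mp
    (le_antisymm (dsum_le_of_le h) h2)
  exact h3 i (Finset.mem_univ i)

lemma isHomog_dsum [CommSemiring k] {F : MvPolynomial (Fin 4) k} {t : ℕ}
    (h : F.IsHomogeneous t) : ∀ d ∈ F.support, dsum d = t := by
  intro d hd
  have h2 := h (mem_support_iff.mp hd)
  rw [← h2, Finsupp.weight_apply]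
  rw [Finsupp.sum_fintype _ _ (fun _ => by simp)]
  simp [dsum]

/-- The ideal of polynomials whose coefficients vanish below total degree `m`. -/
def Jlow [CommSemiring k] (m : ℕ) : Ideal (MvPolynomial (Fin 4) k) where
  carrier := {f | ∀ b, dsum b < m → coeff b f = 0}
  zero_mem' := by intro b _; simp
  add_mem' := by intro f g hf hg b hb; rw [coeff_add, hf b hb, hg b hb, add_zero]
  smul_mem' := by
    intro r f hf b hb
    rw [smul_eq_mul, coeff_mul]
    apply Finset.sum_eq_zero
    intro x hx
    have hx2 : x.1 + x.2 = b := Finset.HasAntidiagonal.mem_antidiagonal.mp hx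
    have : dsum x.2 < m := by
      have : dsum x.1 + dsum x.2 = dsum b := by rw [← dsum_add, hx2]
      omega
    rw [hf x.2 this, mul_zero]

lemma mem_Jlow [CommSemiring k] {m : ℕ} {f : MvPolynomial (Fin 4) k} :
    f ∈ Jlow (k := k) m ↔ ∀ b, dsum b < m → coeff b f = 0 := Iff.rfl

lemma Jlow_mul_le [CommSemiring k] (a b : ℕ) :
    Jlow (k := k) a * Jlow b ≤ Jlow (a + b) := by
  rw [Ideal.mul_le]
  intro f hf g hg b hb
  rw [coeff_mul]
  apply Finset.sum_eq_zero
  intro x hx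
  have hx2 : x.1 + x.2 = b := Finset.HasAntidiagonal.mem_antidiagonal.mp hx
  have hsum : dsum x.1 + dsum x.2 = dsum b := by rw [← dsum_add, hx2]
  rcases lt_or_ge (dsum x.1) a with h | h
  · rw [hf x.1 h, zero_mul]
  · rw [hg x.2 (by omega), mul_zero]

lemma Jlow_one_pow_le [CommSemiring k] (m : ℕ) :
    (Jlow (k := k) 1) ^ m ≤ Jlow m := by
  induction m with
  | zero => intro f _ b hb; omega
  | succ n ih =>
      calc (Jlow (k := k) 1) ^ (n+1) = (Jlow 1)^n * Jlow 1 := by rw [pow_succ]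
      _ ≤ Jlow n * Jlow 1 := Ideal.mul_mono_left ih
      _ ≤ Jlow (n + 1) := Jlow_mul_le n 1

lemma ker_constantCoeff_le_Jlow [CommSemiring k] :
    RingHom.ker (constantCoeff (R := k) (σ := Fin 4)) ≤ Jlow 1 := by
  intro f hf b hb
  have hb0 : b = 0 := dsum_eq_zero_iff.mp (by omega)
  subst hb0
  simpa [← constantCoeff_eq] using hf

/-- Lemma A: membership in the `m`-th power of a point ideal kills low Taylor
coefficients. -/
lemma ordGe_of_mem_pow {k : Type*} [Field k] {p : Fin 4 → k} {m : ℕ}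
    {f : MvPolynomial (Fin 4) k} (hf : f ∈ pointIdeal p ^ m) :
    ∀ b, dsum b < m → coeff b (tay p f) = 0 := by
  have h1 : Ideal.map (tay (k := k) p).toRingHom (pointIdeal p) ≤
      RingHom.ker (constantCoeff (R := k) (σ := Fin 4)) := by
    rw [pointIdeal, Ideal.map_span, Ideal.span_le]
    rintro g ⟨g0, hg0, rfl⟩
    simp only [SetLike.mem_coe, RingHom.mem_ker]
    rw [AlgHom.toRingHom_eq_coe, RingHom.coe_coe]
    rw [constantCoeff_tay]
    exact hg0.2
  have h2 : tay p f ∈ (Ideal.map (tay (k := k) p).toRingHom (pointIdeal p)) ^ m := by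
    rw [← Ideal.map_pow]
    exact Ideal.mem_map_of_mem _ hf
  have h3 : (Ideal.map (tay (k := k) p).toRingHom (pointIdeal p)) ^ m ≤ Jlow m := by
    calc (Ideal.map (tay (k := k) p).toRingHom (pointIdeal p)) ^ m
        ≤ (Jlow 1) ^ m := Ideal.pow_right_mono (le_trans h1 ker_constantCoeff_le_Jlow) m
    _ ≤ Jlow m := Jlow_one_pow_le m
  exact h3 h2

noncomputable def DF (t : ℕ) : Finset (Fin 4 →₀ ℕ) :=
  (Finset.Nat.antidiagonalTuple 4 t).image Finsupp.equivFunOnFinite.symm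

lemma mem_DF {t : ℕ} {d : Fin 4 →₀ ℕ} : d ∈ DF t ↔ dsum d = t := by
  constructor
  · rintro hd
    obtain ⟨x, hx, rfl⟩ := Finset.mem_image.mp hd
    have := Finset.Nat.mem_antidiagonalTuple.mp hx
    simpa [dsum] using this
  · intro hd
    refine Finset.mem_image.mpr ⟨Finsupp.equivFunOnFinite d, ?_, by simp⟩
    refine Finset.Nat.mem_antidiagonalTuple.mpr ?_
    simpa [dsum] using hd

noncomputable def BF (m : ℕ) : Finset (Fin 4 →₀ ℕ) := (Finset.range m).biUnion DF

lemma mem_BF {m : ℕ} {b : Fin 4 →₀ ℕ} : b ∈ BF m ↔ dsum b < m := by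
  simp only [BF, Finset.mem_biUnion, Finset.mem_range]
  constructor
  · rintro ⟨r, hr, hb⟩; rw [mem_DF.mp hb] at *; omega
  · intro h; exact ⟨dsum b, h, mem_DF.mpr rfl⟩

lemma rep [CommSemiring k] (F : MvPolynomial (Fin 4) k) (D : Finset (Fin 4 →₀ ℕ))
    (h : F.support ⊆ D) : F = ∑ d ∈ D, monomial d (coeff d F) := by
  conv_lhs => rw [F.as_sum]
  refine Finset.sum_subset h ?_
  intro d _ hd
  rw [notMem_support_iff.mp hd, map_zero]

lemma tay_monomial_C [CommSemiring k] (p : Fin 4 → k) (d : Fin 4 →₀ ℕ) (c : k) :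
    tay p (monomial d c) = C c * tay p (monomial d 1) := by
  have : monomial d c = C c * monomial d 1 := by rw [C_mul_monomial, mul_one]
  rw [this, map_mul, tay_C]


section MatrixPart
variable [Field k]

noncomputable def Mgen (k : Type*) [Field k] (m : ℕ) :
    Matrix (Fin 8 × ↥(BF m)) ↥(DF (2*m-1)) (MvPolynomial (Fin 8 × Fin 4) k) :=
  fun r d => coeff r.2.1 (tay (fun i => X (r.1, i)) (monomial d.1 1))

noncomputable def MatAt (m : ℕ) (p : Fin 8 → Fin 4 → k) :
    Matrix (Fin 8 × ↥(BF m)) ↥(DF (2*m-1)) k :=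
  (Mgen k m).map (eval fun q => p q.1 q.2)

lemma MatAt_apply (m : ℕ) (p : Fin 8 → Fin 4 → k) (r : Fin 8 × ↥(BF m))
    (d : ↥(DF (2*m-1))) :
    MatAt m p r d = coeff r.2.1 (tay (p r.1) (monomial d.1 (1:k))) := by
  rw [MatAt, Matrix.map_apply, Mgen, ← coeff_map, map_tay]
  have h1 : (fun i => (eval fun q : Fin 8 × Fin 4 => p q.1 q.2) (X (r.1, i))) = p r.1 := by
    funext i; simp
  rw [h1, map_monomial, map_one]

lemma mulVec_tay (m : ℕ) (p : Fin 8 → Fin 4 → k) (F : MvPolynomial (Fin 4) k)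
    (hsupp : F.support ⊆ DF (2*m-1)) (r : Fin 8 × ↥(BF m)) :
    (MatAt m p).mulVec (fun d => coeff d.1 F) r = coeff r.2.1 (tay (p r.1) F) := by
  conv_rhs => rw [rep F _ hsupp]
  rw [map_sum, coeff_sum]
  have : ∀ d ∈ DF (2*m-1), coeff r.2.1 (tay (p r.1) (monomial d (coeff d F)))
      = coeff r.2.1 (tay (p r.1) (monomial d (1:k))) * coeff d F := by
    intro d _
    rw [tay_monomial_C, coeff_C_mul, mul_comm]
  rw [Finset.sum_congr rfl this]
  rw [Matrix.mulVec, dotProduct]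
  rw [← Finset.sum_coe_sort (DF (2*m-1))
    (fun d => coeff r.2.1 (tay (p r.1) (monomial d (1:k))) * coeff d F)]
  apply Finset.sum_congr rfl
  intro d _
  rw [MatAt_apply]

lemma exists_leftInverse {ρ ι : Type*} [Fintype ρ] [Fintype ι] [DecidableEq ρ] [DecidableEq ι]
    (N : Matrix ρ ι k) (h : ∀ v : ι → k, N.mulVec v = 0 → v = 0) :
    ∃ L : Matrix ι ρ k, L * N = 1 := by
  have hker : LinearMap.ker (Matrix.toLin' N) = ⊥ := by
    rw [LinearMap.ker_eq_bot']
    intro v hv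
    exact h v (by rwa [Matrix.toLin'_apply] at hv)
  obtain ⟨ψ, hψ⟩ := LinearMap.exists_leftInverse_of_injective (Matrix.toLin' N) hker
  refine ⟨LinearMap.toMatrix' ψ, ?_⟩
  apply Matrix.toLin'.injective
  rw [Matrix.toLin'_mul, Matrix.toLin'_toMatrix', Matrix.toLin'_one]
  exact hψ

lemma mulVec_inj_of_det_ne {ρ ι : Type*} [Fintype ρ] [Fintype ι] [DecidableEq ι]
    (L : Matrix ι ρ k) (N : Matrix ρ ι k) (h : (L * N).det ≠ 0)
    (v : ι → k) (hv : N.mulVec v = 0) : v = 0 := by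
  have h1 : (L * N)⁻¹ * (L * N) = 1 := Matrix.nonsing_inv_mul _ (isUnit_iff_ne_zero.mpr h)
  have h2 : (L * N).mulVec v = 0 := by
    rw [← Matrix.mulVec_mulVec, hv, Matrix.mulVec_zero]
  calc v = (1 : Matrix ι ι k).mulVec v := (Matrix.one_mulVec v).symm
  _ = ((L*N)⁻¹ * (L*N)).mulVec v := by rw [h1]
  _ = (L*N)⁻¹.mulVec ((L*N).mulVec v) := by rw [← Matrix.mulVec_mulVec]
  _ = 0 := by rw [h2, Matrix.mulVec_zero]

noncomputable def detPoly (k : Type*) [Field k] (m : ℕ)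
    (L : Matrix ↥(DF (2*m-1)) (Fin 8 × ↥(BF m)) k) : MvPolynomial (Fin 8 × Fin 4) k :=
  (@HMul.hMul _ _ _ Matrix.instHMulOfFintypeOfMulOfAddCommMonoid
    (L.map (MvPolynomial.C)) (Mgen k m)).det

lemma eval_detPoly (m : ℕ) (L : Matrix ↥(DF (2*m-1)) (Fin 8 × ↥(BF m)) k)
    (p : Fin 8 → Fin 4 → k) :
    eval (fun q => p q.1 q.2) (detPoly k m L) = (L * MatAt m p).det := by
  rw [detPoly, RingHom.map_det]
  congr 1
  show (@HMul.hMul _ _ _ Matrix.instHMulOfFintypeOfMulOfAddCommMonoid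
    (L.map ⇑C) (Mgen k m)).map (eval fun q : Fin 8 × Fin 4 => p q.1 q.2) = L * MatAt m p
  rw [Matrix.map_mul]
  congr 1
  ext d r
  simp [Matrix.map_apply]

end MatrixPart

section LemBPart
variable [Field k]

/-- Scaling substitution `X i ↦ s i * X i`. -/
noncomputable def scl (s : Fin 4 → k) :
    MvPolynomial (Fin 4) k →ₐ[k] MvPolynomial (Fin 4) k :=
  aeval fun i => C (s i) * X i

lemma scl_X (s : Fin 4 → k) (i : Fin 4) : scl s (X i) = C (s i) * X i := aeval_X _ _

lemma scl_C (s : Fin 4 → k) (c : k) : scl s (C c) = C c := by simp [scl, algebraMap_eq]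

lemma scl_monomial (s : Fin 4 → k) (d : Fin 4 →₀ ℕ) (c : k) :
    scl s (monomial d c) = monomial d (c * ∏ i, s i ^ d i) := by
  rw [scl, aeval_monomial, algebraMap_eq, Finsupp.prod_pow]
  have h1 : ∏ i, (C (s i) * X i) ^ d i
      = C (∏ i, s i ^ d i) * ∏ i, (X i : MvPolynomial (Fin 4) k) ^ d i := by
    rw [map_prod, ← Finset.prod_mul_distrib]
    apply Finset.prod_congr rfl
    intro i _
    rw [mul_pow, map_pow]
  rw [h1, monomial_eq, Finsupp.prod_pow, map_mul, ← mul_assoc]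

lemma coeff_scl (s : Fin 4 → k) (b : Fin 4 →₀ ℕ) (P : MvPolynomial (Fin 4) k) :
    coeff b (scl s P) = (∏ i, s i ^ b i) * coeff b P := by
  conv_lhs => rw [P.as_sum, map_sum]
  rw [coeff_sum]
  simp only [scl_monomial, coeff_monomial]
  by_cases hb : b ∈ P.support
  · rw [Finset.sum_ite_eq' P.support b (fun d => coeff d P * ∏ i, s i ^ d i), if_pos hb,
      mul_comm]
  · rw [Finset.sum_ite_eq' P.support b (fun d => coeff d P * ∏ i, s i ^ d i), if_neg hb,
      notMem_support_iff.mp hb, mul_zero]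

lemma tay_one_scl (s : Fin 4 → k) (F : MvPolynomial (Fin 4) k) :
    tay (fun _ => (1:k)) (scl s F) = scl s (tay s F) := by
  have h : (tay (fun _ => (1:k))).comp (scl s) = (scl s).comp (tay s) := by
    apply algHom_ext
    intro i
    simp only [AlgHom.comp_apply, scl_X, tay_X]
    rw [map_mul, tay_C, tay_X, map_add, scl_C, scl_X, C_1]
    ring
  calc tay (fun _ => (1:k)) (scl s F) = ((tay (fun _ => (1:k))).comp (scl s)) F := rfl
  _ = ((scl s).comp (tay s)) F := by rw [h]
  _ = scl s (tay s F) := rfl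

lemma tay_neg (p : Fin 4 → k) (t : ℕ) (F : MvPolynomial (Fin 4) k)
    (hdeg : ∀ d ∈ F.support, dsum d = t) :
    tay (fun i => - p i) F = ((-1:k)^t) • scl (fun _ => (-1:k)) (tay p F) := by
  conv_lhs => rw [F.as_sum]
  conv_rhs => rw [F.as_sum]
  rw [map_sum, map_sum, map_sum, Finset.smul_sum]
  apply Finset.sum_congr rfl
  intro d hd
  rw [tay_monomial, tay_monomial, map_mul, scl_C, map_prod]
  simp only [map_pow, map_add, scl_C, scl_X]
  have hterm : ∀ i : Fin 4, C (p i) + C (-1:k) * X i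
      = -(C (-(p i)) + X i) := by
    intro i
    rw [map_neg, map_neg, map_one]
    ring
  have hprod : ∏ i, (C (p i) + C (-1:k) * X i) ^ d i
      = ((-1 : MvPolynomial (Fin 4) k))^t * ∏ i, (C (-(p i)) + X i) ^ d i := by
    rw [Finset.prod_congr rfl (fun i _ => by rw [hterm i, neg_pow])]
    rw [Finset.prod_mul_distrib, Finset.prod_pow_eq_pow_sum,
      show ∑ i, d i = t from hdeg d hd]
  rw [hprod, smul_eq_C_mul, map_pow, map_neg, map_one]
  have hAA : ((-1 : MvPolynomial (Fin 4) k))^t * (-1)^t = 1 := by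
    rw [← mul_pow]; norm_num
  rw [mul_left_comm ((-1 : MvPolynomial (Fin 4) k) ^ t) (C (coeff d F)),
    ← mul_assoc ((-1 : MvPolynomial (Fin 4) k) ^ t), hAA, one_mul]

def sg {k : Type*} [Field k] (b : Bool) : k := if b then -1 else 1

def pstar (k : Type*) [Field k] : Fin 8 → Fin 4 → k := fun j i =>
  if i.val = 0 then 1 else if (j.val / 2 ^ (i.val - 1)) % 2 = 1 then -1 else 1

lemma pstar_covers (s : Fin 4 → Bool) : ∃ j : Fin 8,
    (∀ i, (sg (s i) : k) = pstar k j i) ∨ (∀ i, (sg (s i) : k) = - pstar k j i) := by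
  have hs : ∀ i, s i = false ∨ s i = true := fun i => Bool.dichotomy (s i)
  rcases hs 0 with h0 | h0 <;> rcases hs 1 with h1 | h1 <;>
    rcases hs 2 with h2 | h2 <;> rcases hs 3 with h3 | h3
  · exact ⟨⟨0, by norm_num⟩, Or.inl (by intro i; fin_cases i <;> simp [sg, pstar, h0, h1, h2, h3, Fin.val_mk] <;> norm_num)⟩
  · exact ⟨⟨4, by norm_num⟩, Or.inl (by intro i; fin_cases i <;> simp [sg, pstar, h0, h1, h2, h3, Fin.val_mk] <;> norm_num)⟩
  · exact ⟨⟨2, by norm_num⟩, Or.inl (by intro i; fin_cases i <;> simp [sg, pstar, h0, h1, h2, h3, Fin.val_mk] <;> norm_num)⟩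
  · exact ⟨⟨6, by norm_num⟩, Or.inl (by intro i; fin_cases i <;> simp [sg, pstar, h0, h1, h2, h3, Fin.val_mk] <;> norm_num)⟩
  · exact ⟨⟨1, by norm_num⟩, Or.inl (by intro i; fin_cases i <;> simp [sg, pstar, h0, h1, h2, h3, Fin.val_mk] <;> norm_num)⟩
  · exact ⟨⟨5, by norm_num⟩, Or.inl (by intro i; fin_cases i <;> simp [sg, pstar, h0, h1, h2, h3, Fin.val_mk] <;> norm_num)⟩
  · exact ⟨⟨3, by norm_num⟩, Or.inl (by intro i; fin_cases i <;> simp [sg, pstar, h0, h1, h2, h3, Fin.val_mk] <;> norm_num)⟩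
  · exact ⟨⟨7, by norm_num⟩, Or.inl (by intro i; fin_cases i <;> simp [sg, pstar, h0, h1, h2, h3, Fin.val_mk] <;> norm_num)⟩
  · exact ⟨⟨7, by norm_num⟩, Or.inr (by intro i; fin_cases i <;> simp [sg, pstar, h0, h1, h2, h3, Fin.val_mk] <;> norm_num)⟩
  · exact ⟨⟨3, by norm_num⟩, Or.inr (by intro i; fin_cases i <;> simp [sg, pstar, h0, h1, h2, h3, Fin.val_mk] <;> norm_num)⟩
  · exact ⟨⟨5, by norm_num⟩, Or.inr (by intro i; fin_cases i <;> simp [sg, pstar, h0, h1, h2, h3, Fin.val_mk] <;> norm_num)⟩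
  · exact ⟨⟨1, by norm_num⟩, Or.inr (by intro i; fin_cases i <;> simp [sg, pstar, h0, h1, h2, h3, Fin.val_mk] <;> norm_num)⟩
  · exact ⟨⟨6, by norm_num⟩, Or.inr (by intro i; fin_cases i <;> simp [sg, pstar, h0, h1, h2, h3, Fin.val_mk] <;> norm_num)⟩
  · exact ⟨⟨2, by norm_num⟩, Or.inr (by intro i; fin_cases i <;> simp [sg, pstar, h0, h1, h2, h3, Fin.val_mk] <;> norm_num)⟩
  · exact ⟨⟨4, by norm_num⟩, Or.inr (by intro i; fin_cases i <;> simp [sg, pstar, h0, h1, h2, h3, Fin.val_mk] <;> norm_num)⟩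
  · exact ⟨⟨0, by norm_num⟩, Or.inr (by intro i; fin_cases i <;> simp [sg, pstar, h0, h1, h2, h3, Fin.val_mk] <;> norm_num)⟩

lemma ord_all_signs {m t : ℕ} {F : MvPolynomial (Fin 4) k}
    (hdeg : ∀ d ∈ F.support, dsum d = t)
    (hord : ∀ j : Fin 8, ∀ b, dsum b < m → coeff b (tay (pstar k j) F) = 0)
    (s : Fin 4 → Bool) : ∀ b, dsum b < m →
      coeff b (tay (fun i => (sg (s i) : k)) F) = 0 := by
  intro b hb
  obtain ⟨j, hj | hj⟩ := pstar_covers (k := k) s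
  · rw [show (fun i => (sg (s i) : k)) = pstar k j from funext hj]
    exact hord j b hb
  · rw [show (fun i => (sg (s i) : k)) = (fun i => - pstar k j i) from funext hj]
    rw [tay_neg _ t F hdeg, coeff_smul, coeff_scl, hord j b hb, mul_zero, smul_zero]

lemma ord_one_scl {m t : ℕ} {F : MvPolynomial (Fin 4) k}
    (hdeg : ∀ d ∈ F.support, dsum d = t)
    (hord : ∀ j : Fin 8, ∀ b, dsum b < m → coeff b (tay (pstar k j) F) = 0)
    (s : Fin 4 → Bool) : ∀ b, dsum b < m →
      coeff b (tay (fun _ => (1:k)) (scl (fun i => (sg (s i) : k)) F)) = 0 := by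
  intro b hb
  rw [tay_one_scl, coeff_scl, ord_all_signs hdeg hord s b hb, mul_zero]

lemma char_sum [CharZero k] (eN : Fin 4 → ℕ) (hEN : ∀ i, eN i < 2) (b : Fin 4 →₀ ℕ) :
    (∑ s : Fin 4 → Bool, ∏ i, (sg (s i) : k) ^ (eN i + b i))
      = if (∀ i, b i % 2 = eN i) then (16:k) else 0 := by
  have hswap : (∑ s : Fin 4 → Bool, ∏ i, (sg (s i) : k) ^ (eN i + b i))
      = ∏ i, (∑ v : Bool, (sg v : k) ^ (eN i + b i)) := by
    rw [Finset.prod_univ_sum]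
    rw [Fintype.piFinset_univ]
  rw [hswap]
  have hfac : ∀ i : Fin 4, (∑ v : Bool, (sg v : k) ^ (eN i + b i))
      = if b i % 2 = eN i then (2:k) else 0 := by
    intro i
    rw [Fintype.sum_bool]
    show ((-1:k))^(eN i + b i) + (1:k)^(eN i + b i) = _
    rw [one_pow]
    rcases Nat.even_or_odd (eN i + b i) with he | he
    · rw [he.neg_one_pow, if_pos]
      · norm_num
      · have := hEN i
        rcases Nat.even_iff.mp he with h2
        omega
    · rw [he.neg_one_pow, if_neg]
      · norm_num
      · have := hEN i
        rcases Nat.odd_iff.mp he with h2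
        omega
  rw [Finset.prod_congr rfl (fun i _ => hfac i)]
  by_cases hall : ∀ i, b i % 2 = eN i
  · rw [if_pos hall]
    rw [Finset.prod_congr rfl (fun i _ => if_pos (hall i))]
    norm_num
  · rw [if_neg hall]
    push_neg at hall
    obtain ⟨i, hi⟩ := hall
    exact Finset.prod_eq_zero (Finset.mem_univ i) (if_neg hi)

lemma avg [CharZero k] (eN : Fin 4 → ℕ) (hEN : ∀ i, eN i < 2)
    (F : MvPolynomial (Fin 4) k) :
    (16 : k) • (∑ d ∈ F.support.filter (fun d => ∀ i, d i % 2 = eN i),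
        monomial d (coeff d F))
      = ∑ s : Fin 4 → Bool,
          (∏ i, (sg (s i) : k) ^ eN i) • scl (fun i => (sg (s i) : k)) F := by
  apply MvPolynomial.ext
  intro b
  rw [coeff_smul, coeff_sum, coeff_sum]
  have hrhs : ∀ s : Fin 4 → Bool,
      coeff b ((∏ i, (sg (s i) : k) ^ eN i) • scl (fun i => (sg (s i) : k)) F)
        = (∏ i, (sg (s i) : k) ^ (eN i + b i)) * coeff b F := by
    intro s
    rw [coeff_smul, coeff_scl, smul_eq_mul, ← mul_assoc, ← Finset.prod_mul_distrib]
    congr 1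
    apply Finset.prod_congr rfl
    intro i _
    rw [pow_add]
  rw [Finset.sum_congr rfl (fun s _ => hrhs s), ← Finset.sum_mul, char_sum eN hEN b]
  simp only [coeff_monomial]
  rw [Finset.sum_ite_eq' (F.support.filter (fun d => ∀ i, d i % 2 = eN i)) b
    (fun d => coeff d F)]
  by_cases hall : ∀ i, b i % 2 = eN i
  · rw [if_pos hall]
    by_cases hb : b ∈ F.support
    · rw [if_pos (Finset.mem_filter.mpr ⟨hb, hall⟩), smul_eq_mul, mul_comm]
    · rw [if_neg (fun h => hb (Finset.mem_filter.mp h).1),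
        notMem_support_iff.mp hb, smul_zero, mul_zero]
  · rw [if_neg hall, if_neg (fun h => hall (Finset.mem_filter.mp h).2), smul_zero,
      zero_mul]


lemma totalDegree_monomial_le' (d : Fin 4 →₀ ℕ) (c : k) :
    (monomial d c).totalDegree ≤ dsum d := by
  by_cases hc : c = 0
  · subst hc; rw [map_zero, totalDegree_zero]; omega
  · rw [totalDegree_monomial d hc, dsum_finsuppSum]

lemma tay_totalDegree_le (p : Fin 4 → k) (F : MvPolynomial (Fin 4) k) :
    (tay p F).totalDegree ≤ F.totalDegree := by
  conv_lhs => rw [F.as_sum, map_sum]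
  apply le_trans (totalDegree_finset_sum _ _)
  apply Finset.sup_le
  intro d hd
  rw [tay_monomial]
  apply le_trans (totalDegree_mul _ _)
  have h2 : (∏ i, (C (p i) + X i)^(d i)).totalDegree ≤ ∑ i, d i := by
    apply le_trans (totalDegree_finset_prod _ _)
    apply Finset.sum_le_sum
    intro i _
    apply le_trans (totalDegree_pow _ _)
    have h3 : (C (p i) + X i).totalDegree ≤ 1 := by
      apply le_trans (totalDegree_add _ _)
      simp [totalDegree_C, totalDegree_X]
    calc d i * (C (p i) + X i).totalDegree ≤ d i * 1 := Nat.mul_le_mul_left _ h3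
    _ = d i := mul_one _
  have h4 : (∑ i, d i) ≤ F.totalDegree := by
    have h5 := le_totalDegree hd
    rwa [dsum_finsuppSum] at h5
  rw [totalDegree_C]
  omega

set_option maxHeartbeats 800000 in
/-- Lemma B: at the sign configuration, a nonzero polynomial all of whose
monomials have degree `t` and whose Taylor coefficients of order `< m` vanish
at all 8 sign points satisfies `t ≥ 2m`. -/
lemma lemB [CharZero k] (m t : ℕ) (F : MvPolynomial (Fin 4) k) (hF : F ≠ 0)
    (hdeg : ∀ d ∈ F.support, dsum d = t)
    (hord : ∀ j : Fin 8, ∀ b, dsum b < m → coeff b (tay (pstar k j) F) = 0) :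
    2 * m ≤ t := by
  classical
  obtain ⟨dstar, hdstar⟩ := (support_nonempty (p := F)).mpr hF
  set eN : Fin 4 → ℕ := fun i => dstar i % 2 with heNdef
  have hEN : ∀ i, eN i < 2 := by intro i; rw [heNdef]; exact Nat.mod_lt _ two_pos
  set SetE := F.support.filter (fun d => ∀ i, d i % 2 = eN i) with hSetEdef
  have hdstarE : dstar ∈ SetE := by
    rw [hSetEdef]
    exact Finset.mem_filter.mpr ⟨hdstar, fun i => by rw [heNdef]⟩
  have hordFe : ∀ b, dsum b < m →
      coeff b (tay (fun _ => (1:k)) (∑ d ∈ SetE, monomial d (coeff d F))) = 0 := by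
    intro b hb
    have h1 := congrArg (fun P => coeff b (tay (fun _ => (1:k)) P)) (avg eN hEN F)
    rw [map_smul, coeff_smul] at h1
    have hz : coeff b ((tay fun _ => (1:k)) (∑ s : Fin 4 → Bool,
        (∏ i, (sg (s i):k) ^ eN i) • scl (fun i => (sg (s i):k)) F)) = 0 := by
      rw [map_sum, coeff_sum]
      apply Finset.sum_eq_zero
      intro s _
      rw [map_smul, coeff_smul, ord_one_scl hdeg hord s b hb, smul_zero]
    rw [hz] at h1
    rw [← hSetEdef] at h1
    rcases smul_eq_zero.mp h1 with h | h
    · exact absurd h (by norm_num)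
    · exact h
  set κf : (Fin 4 →₀ ℕ) → (Fin 4 →₀ ℕ) :=
    fun d => Finsupp.equivFunOnFinite.symm (fun i => (d i - eN i)/2) with hκdef
  have hκval : ∀ d i, κf d i = (d i - eN i)/2 := by
    intro d i
    rw [hκdef]
    rfl
  have hrecon : ∀ d ∈ SetE, ∀ i, d i = eN i + 2 * κf d i := by
    intro d hd i
    have hpar := (Finset.mem_filter.mp hd).2 i
    have h2 := hEN i
    rw [hκval]
    omega
  have hsplit : ∀ d ∈ SetE, 2 * dsum (κf d) + (∑ i, eN i) = t := by
    intro d hd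
    have hd' : dsum d = t := hdeg d (Finset.mem_filter.mp hd).1
    rw [← hd', dsum, dsum, Finset.mul_sum, ← Finset.sum_add_distrib]
    apply Finset.sum_congr rfl
    intro i _
    have h3 := hrecon d hd i
    omega
  set s0 := dsum (κf dstar) with hs0def
  have hE : 2 * s0 + (∑ i, eN i) = t := hsplit dstar hdstarE
  have hsame : ∀ d ∈ SetE, dsum (κf d) = s0 := by
    intro d hd
    have h1 := hsplit d hd
    omega
  set G := ∑ d ∈ SetE, monomial (κf d) (coeff d F) with hGdef
  have hκinj : ∀ d ∈ SetE, ∀ d' ∈ SetE, κf d = κf d' → d = d' := by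
    intro d hd d' hd' h
    ext i
    have h1 := hrecon d hd i
    have h2 := hrecon d' hd' i
    have h3 : κf d i = κf d' i := by rw [h]
    omega
  have hGd : coeff (κf dstar) G = coeff dstar F := by
    rw [hGdef, coeff_sum]
    rw [Finset.sum_eq_single_of_mem dstar hdstarE
      (fun d hd hne => by
        rw [coeff_monomial, if_neg (fun h => hne (hκinj d hd dstar hdstarE h))])]
    rw [coeff_monomial, if_pos rfl]
  have hGne : G ≠ 0 := by
    intro h
    rw [h, coeff_zero] at hGd
    exact (mem_support_iff.mp hdstar) hGd.symm
  set U : MvPolynomial (Fin 4) k := ∏ i, (1 + X i)^(eN i) with hUdef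
  set u2 : Fin 4 → MvPolynomial (Fin 4) k := fun i => X i * (2 + X i) with hu2def
  set H := tay (fun _ => (1:k)) G with hHdef
  set W : MvPolynomial (Fin 4) k := aeval u2 H with hWdef
  have hone : (C (1:k) : MvPolynomial (Fin 4) k) = 1 := C_1
  have hu2val : ∀ i, u2 i = X i * (2 + X i) := by intro i; rw [hu2def]
  have hsq : ∀ i : Fin 4, (1 + u2 i) = (1 + X i)^2 := by
    intro i; rw [hu2val]; ring
  have hid : tay (fun _ => (1:k)) (∑ d ∈ SetE, monomial d (coeff d F)) = U * W := by
    rw [hWdef, hHdef, hGdef, map_sum, map_sum, map_sum, Finset.mul_sum]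
    apply Finset.sum_congr rfl
    intro d hd
    rw [tay_monomial, tay_monomial, map_mul]
    rw [show (aeval u2) (C (coeff d F)) = C (coeff d F) from by simp [algebraMap_eq]]
    rw [map_prod]
    simp only [map_pow, map_add, aeval_X, aeval_C, algebraMap_eq]
    rw [hone]
    have hfac : ∀ i : Fin 4, ((1:MvPolynomial (Fin 4) k) + X i)^(d i)
        = (1 + X i)^(eN i) * ((1 + u2 i))^(κf d i) := by
      intro i
      rw [hsq i, ← pow_mul, ← pow_add, ← hrecon d hd i]
    rw [Finset.prod_congr rfl (fun i _ => hfac i), Finset.prod_mul_distrib, ← hUdef]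
    ring
  have hU0 : coeff 0 U = 1 := by
    have h1 : constantCoeff U = 1 := by
      rw [hUdef, map_prod]
      simp
    rw [constantCoeff_eq] at h1
    exact h1
  have hordW : ∀ r, r < m → ∀ b, dsum b = r → coeff b W = 0 := by
    intro r
    induction r using Nat.strong_induction_on with
    | _ r IH =>
      intro hrm b hbr
      have h0 : coeff b (U * W) = 0 := by rw [← hid]; exact hordFe b (by omega)
      rw [coeff_mul] at h0
      have hside : ∀ x ∈ Finset.HasAntidiagonal.antidiagonal b, x ≠ ((0 : Fin 4 →₀ ℕ), b) →
          coeff x.1 U * coeff x.2 W = 0 := by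
        intro x hx hne
        have hxe : x.1 + x.2 = b := Finset.HasAntidiagonal.mem_antidiagonal.mp hx
        by_cases hx1 : x.1 = 0
        · exfalso
          apply hne
          have hx2 : x.2 = b := by rw [← hxe, hx1, zero_add]
          exact Prod.ext hx1 hx2
        · have h1 : 1 ≤ dsum x.1 := by
            rcases Nat.eq_zero_or_pos (dsum x.1) with h | h
            · exact absurd (dsum_eq_zero_iff.mp h) hx1
            · exact h
          have h2 : dsum x.1 + dsum x.2 = r := by rw [← dsum_add, hxe, hbr]
          rw [IH (dsum x.2) (by omega) (by omega) x.2 rfl, mul_zero]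
      rw [Finset.sum_eq_single_of_mem ((0 : Fin 4 →₀ ℕ), b)
        (Finset.HasAntidiagonal.mem_antidiagonal.mpr (zero_add b)) hside] at h0
      rw [hU0, one_mul] at h0
      exact h0
  have hHne : H ≠ 0 := by
    intro h
    apply hGne
    apply tay_injective (fun _ => (1:k))
    rw [map_zero]
    exact hHdef ▸ h
  have hsuppH : H.support.Nonempty := support_nonempty.mpr hHne
  obtain ⟨bmin, hbmem, hbminval⟩ :
      ∃ b ∈ H.support, dsum b = (H.support.image dsum).min' (hsuppH.image dsum) := by
    obtain ⟨b, hb, hval⟩ := Finset.mem_image.mp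
      (Finset.min'_mem (H.support.image dsum) (hsuppH.image dsum))
    exact ⟨b, hb, hval⟩
  have hminle : ∀ c ∈ H.support, dsum bmin ≤ dsum c := by
    intro c hc
    rw [hbminval]
    exact Finset.min'_le _ _ (Finset.mem_image_of_mem dsum hc)
  have hmonprod : ∀ κ : Fin 4 →₀ ℕ,
      (∏ i, (X i : MvPolynomial (Fin 4) k) ^ κ i) = monomial κ 1 := by
    intro κ
    rw [monomial_eq, hone, one_mul, Finsupp.prod_pow]
  have hcoeffW : coeff bmin W = 2^(dsum bmin) * coeff bmin H := by
    rw [hWdef]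
    conv_lhs => rw [H.as_sum, map_sum]
    rw [coeff_sum]
    have hterm : ∀ κ : Fin 4 →₀ ℕ, aeval u2 (monomial κ (coeff κ H))
        = C (coeff κ H) *
          (monomial κ 1 * ∏ i, ((2:MvPolynomial (Fin 4) k) + X i) ^ κ i) := by
      intro κ
      rw [aeval_monomial, algebraMap_eq, Finsupp.prod_pow]
      refine congrArg (fun x => C (coeff κ H) * x) ?_
      rw [← hmonprod κ, ← Finset.prod_mul_distrib]
      apply Finset.prod_congr rfl
      intro i _
      rw [hu2val, mul_pow]
    rw [Finset.sum_congr rfl (fun κ _ => by rw [hterm κ])]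
    simp only [coeff_C_mul, coeff_monomial_mul']
    rw [Finset.sum_eq_single_of_mem bmin hbmem (fun κ hκ hne => by
      by_cases hle : κ ≤ bmin
      · exact absurd (eq_of_le_of_dsum_le hle (hminle κ hκ)) hne
      · rw [if_neg hle, mul_zero])]
    rw [if_pos le_rfl, one_mul]
    have hV : coeff (bmin - bmin) (∏ i, ((2:MvPolynomial (Fin 4) k) + X i) ^ bmin i)
        = 2^(dsum bmin) := by
      rw [tsub_self]
      have hcc : constantCoeff (∏ i, ((2:MvPolynomial (Fin 4) k) + X i) ^ bmin i)
          = ∏ i, (2:k) ^ bmin i := by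
        rw [map_prod]
        simp [map_ofNat]
      rw [constantCoeff_eq, Finset.prod_pow_eq_pow_sum] at hcc
      exact hcc
    rw [hV, mul_comm]
  have hmle : m ≤ dsum bmin := by
    by_contra hcon
    push_neg at hcon
    have h1 := hordW (dsum bmin) hcon bmin rfl
    rw [hcoeffW] at h1
    rcases mul_eq_zero.mp h1 with h | h
    · exact pow_ne_zero _ two_ne_zero h
    · exact mem_support_iff.mp hbmem h
  have hle1 : dsum bmin ≤ H.totalDegree := by
    have h1 := le_totalDegree hbmem
    rwa [dsum_finsuppSum] at h1
  have hle2 : H.totalDegree ≤ G.totalDegree := by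
    rw [hHdef]
    exact tay_totalDegree_le _ _
  have hle3 : G.totalDegree ≤ s0 := by
    rw [hGdef]
    apply le_trans (totalDegree_finset_sum _ _)
    apply Finset.sup_le
    intro d hd
    exact le_trans (totalDegree_monomial_le' _ _) (le_of_eq (hsame d hd))
  omega

lemma pstar_ne_zero (j : Fin 8) : pstar k j ≠ 0 := by
  intro h
  have h0 := congrFun h 0
  simp [pstar] at h0

lemma exists_linear (p : Fin 4 → k) (hp : p ≠ 0) :
    ∃ ℓ : MvPolynomial (Fin 4) k, ℓ ≠ 0 ∧ ℓ.IsHomogeneous 1 ∧ eval p ℓ = 0 := by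
  have hex : ∃ i0, p i0 ≠ 0 := by
    by_contra h
    push_neg at h
    exact hp (funext h)
  obtain ⟨i0, hi0⟩ := hex
  set i1 : Fin 4 := if i0 = 0 then 1 else 0 with hi1def
  have hne : i1 ≠ i0 := by
    rw [hi1def]
    by_cases h : i0 = 0
    · rw [if_pos h, h]; decide
    · rw [if_neg h]; exact fun hh => h hh.symm
  refine ⟨C (p i1) * X i0 - C (p i0) * X i1, ?_, ?_, ?_⟩
  · intro h
    have hc := congrArg (coeff (Finsupp.single i1 1)) h
    rw [coeff_sub, coeff_zero, coeff_C_mul, coeff_C_mul, coeff_X', coeff_X'] at hc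
    rw [if_neg (fun hh => hne (Finsupp.single_left_injective one_ne_zero hh).symm),
      if_pos rfl] at hc
    rw [mul_zero, mul_one, zero_sub, neg_eq_zero] at hc
    exact hi0 hc
  · have h1 : (C (p i1) * X i0 : MvPolynomial (Fin 4) k).IsHomogeneous 1 := by
      simpa using (isHomogeneous_C (Fin 4) (p i1)).mul (isHomogeneous_X k i0)
    have h2 : (C (p i0) * X i1 : MvPolynomial (Fin 4) k).IsHomogeneous 1 := by
      simpa using (isHomogeneous_C (Fin 4) (p i0)).mul (isHomogeneous_X k i1)
    exact h1.sub h2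
  · simp
    ring

lemma matAt_pstar_inj [CharZero k] (m : ℕ) (hm : 1 ≤ m) :
    ∀ v : ↥(DF (2*m-1)) → k, (MatAt m (pstar k)).mulVec v = 0 → v = 0 := by
  intro v hv
  classical
  set F : MvPolynomial (Fin 4) k := ∑ d : ↥(DF (2*m-1)), monomial d.1 (v d) with hFdef
  have hcoeff : ∀ d : ↥(DF (2*m-1)), coeff d.1 F = v d := by
    intro d
    rw [hFdef, coeff_sum]
    rw [Finset.sum_eq_single_of_mem d (Finset.mem_univ d) (fun x _ hne => by
      rw [coeff_monomial, if_neg (fun h => hne (Subtype.ext h))])]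
    rw [coeff_monomial, if_pos rfl]
  have hsupp : F.support ⊆ DF (2*m-1) := by
    intro b hb
    by_contra hbD
    apply mem_support_iff.mp hb
    rw [hFdef, coeff_sum]
    apply Finset.sum_eq_zero
    intro x _
    rw [coeff_monomial, if_neg ?_]
    intro h
    exact hbD (h ▸ x.2)
  by_contra hv0
  have hFne : F ≠ 0 := by
    intro h
    apply hv0
    funext d
    simp only [Pi.zero_apply]
    rw [← hcoeff d, h, coeff_zero]
  have hdeg : ∀ d ∈ F.support, dsum d = 2*m-1 := fun d hd => mem_DF.mp (hsupp hd)
  have hvec : v = fun d : ↥(DF (2*m-1)) => coeff d.1 F := funext (fun d => (hcoeff d).symm)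
  have hord : ∀ j : Fin 8, ∀ b, dsum b < m → coeff b (tay (pstar k j) F) = 0 := by
    intro j b hb
    have h1 := congrFun hv (j, ⟨b, mem_BF.mpr hb⟩)
    rw [hvec] at h1
    rw [mulVec_tay m (pstar k) F hsupp (j, ⟨b, mem_BF.mpr hb⟩)] at h1
    exact h1
  have h2m := lemB m (2*m-1) F hFne hdeg hord
  omega

end LemBPart
end S8

/-- For every `m ≥ 1` and `8` points in general position in `ℙ³`, the fat points ideal
`I(m^{×8})` contains no nonzero form of degree `< 2m`; that is, `α(I(m^{×8})) ≥ 2m`. -/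
theorem statement8 (k : Type*) [Field k] [CharZero k] (m : ℕ) (hm : 1 ≤ m) :
    Generic k 3 8 (fun p =>
      (∀ f ∈ fatIdeal p (fun _ => m), ∀ t : ℕ, f ≠ 0 → f.IsHomogeneous t → 2 * m ≤ t)
      ∧ 2 * m ≤ alpha (fatIdeal p (fun _ => m))) := by
  classical
  obtain ⟨L, hL⟩ := S8.exists_leftInverse (S8.MatAt m (S8.pstar k))
    (fun v hv => S8.matAt_pstar_inj m hm v hv)
  refine ⟨{S8.detPoly k m L}, ⟨S8.pstar k, fun j => S8.pstar_ne_zero j,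
    ⟨S8.detPoly k m L, Set.mem_singleton _, ?_⟩⟩, ?_⟩
  · rw [S8.eval_detPoly, hL, Matrix.det_one]
    exact one_ne_zero
  · intro p hp hfp
    obtain ⟨f0, hf0S, hf0⟩ := hfp
    rw [Set.mem_singleton_iff] at hf0S
    subst hf0S
    rw [S8.eval_detPoly] at hf0
    have hinj : ∀ v, (S8.MatAt m p).mulVec v = 0 → v = 0 :=
      fun v hv => S8.mulVec_inj_of_det_ne L (S8.MatAt m p) hf0 v hv
    have hmain : ∀ f ∈ fatIdeal p (fun _ => m), ∀ t : ℕ,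
        f ≠ 0 → f.IsHomogeneous t → 2*m ≤ t := by
      intro F hF t hFne hFhom
      by_contra hlt
      push_neg at hlt
      simp only [fatIdeal, Ideal.mem_iInf] at hF
      set G := X 0 ^ (2*m-1-t) * F with hGdef
      have hGne : G ≠ 0 := mul_ne_zero (pow_ne_zero _ (X_ne_zero _)) hFne
      have hGhom : G.IsHomogeneous (2*m-1) := by
        have h1 : (X (0:Fin 4) : MvPolynomial (Fin 4) k).IsHomogeneous 1 :=
          isHomogeneous_X _ _
        have h2 := h1.pow (2*m-1-t)
        have h3 := h2.mul hFhom
        have h4 : 1 * (2*m-1-t) + t = 2*m-1 := by omega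
        rw [h4] at h3
        exact h3
      have hsuppG : G.support ⊆ S8.DF (2*m-1) := fun d hd =>
        S8.mem_DF.mpr (S8.isHomog_dsum hGhom d hd)
      have hGmem : ∀ j : Fin 8, G ∈ pointIdeal (p j) ^ m :=
        fun j => Ideal.mul_mem_left _ _ (hF j)
      have hvec : (S8.MatAt m p).mulVec (fun d => coeff d.1 G) = 0 := by
        funext r
        rw [S8.mulVec_tay m p G hsuppG r]
        exact S8.ordGe_of_mem_pow (hGmem r.1) r.2.1 (S8.mem_BF.mp r.2.2)
      have hc0 := hinj _ hvec
      apply hGne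
      apply MvPolynomial.ext
      intro b
      rw [coeff_zero]
      by_cases hb : b ∈ G.support
      · have hbD := hsuppG hb
        have h5 := congrFun hc0 ⟨b, hbD⟩
        simpa using h5
      · exact notMem_support_iff.mp hb
    refine ⟨hmain, ?_⟩
    have hSne : {t | ∃ f ∈ fatIdeal p (fun _ => m), f ≠ 0 ∧ f.IsHomogeneous t}.Nonempty := by
      choose ℓ hℓ0 hℓh hℓe using fun j : Fin 8 => S8.exists_linear (p j) (hp j)
      refine ⟨∑ _j : Fin 8, 1 * m, ∏ j : Fin 8, (ℓ j)^m, ?_, ?_, ?_⟩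
      · simp only [fatIdeal, Ideal.mem_iInf]
        intro j
        rw [← Finset.mul_prod_erase Finset.univ _ (Finset.mem_univ j)]
        refine Ideal.mul_mem_right _ _ (Ideal.pow_mem_pow ?_ m)
        exact Ideal.subset_span ⟨⟨1, hℓh j⟩, hℓe j⟩
      · exact Finset.prod_ne_zero_iff.mpr fun j _ => pow_ne_zero _ (hℓ0 j)
      · exact MvPolynomial.IsHomogeneous.prod _ _ _ (fun j _ => (hℓh j).pow m)
    have hmem := Nat.sInf_mem hSne
    obtain ⟨f0, hf0mem, hf0ne, hf0hom⟩ := hmem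
    exact hmain f0 hf0mem _ hf0ne hf0hom
end

section
/- For points p_1,…,p_4 in general position in P^3, the radical ideal I = I(1^{×4}) = ∩_{j=1}^4 m_{p_j} satisfies γ(I) ≥ 4/3; in fact α(I^(3m)) ≥ 4m for all integers m ≥ 1. -/
open MvPolynomial Filter

/-! ### Auxiliary material -/

lemma Finsupp.degree_single' {σ : Type*} (j : σ) (m : ℕ) :
    (Finsupp.single j m).degree = m := by
  rcases eq_or_ne m 0 with rfl | hm
  · rw [Finsupp.single_zero, map_zero]
  · rw [Finsupp.degree_apply, Finsupp.support_single_ne_zero _ hm, Finset.sum_singleton,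
      Finsupp.single_eq_same]

section Aux

variable {k : Type*} [Field k] {n : ℕ}

/-- Substitution by a linear change of variables given by a matrix. -/
noncomputable def linSub (A : Matrix (Fin n) (Fin n) k) :
    MvPolynomial (Fin n) k →ₐ[k] MvPolynomial (Fin n) k :=
  bind₁ (fun i => ∑ j, C (A i j) * X j)

lemma eval_aeval' {σ : Type*} (g : σ → MvPolynomial σ k) (q : σ → k) (f : MvPolynomial σ k) :
    eval q (aeval g f) = eval (fun i => eval q (g i)) f := by
  induction f using MvPolynomial.induction_on with
  | C c => simp
  | add p q h1 h2 =>
      simp only [map_add, ← aeval_eq_bind₁] at h1 h2 ⊢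
      rw [h1, h2]
  | mul_X p i h =>
      simp only [map_mul, ← aeval_eq_bind₁, aeval_X, eval_X] at h ⊢
      rw [h]

lemma eval_linSub (A : Matrix (Fin n) (Fin n) k) (q : Fin n → k) (f : MvPolynomial (Fin n) k) :
    eval q (linSub A f) = eval (A.mulVec q) f := by
  rw [linSub, ← aeval_eq_bind₁, eval_aeval']
  have hfun : (fun i => eval q (∑ j, C (A i j) * X j)) = A.mulVec q := by
    funext i
    simp [Matrix.mulVec, dotProduct]
  rw [hfun]

lemma linSub_linSub (A B : Matrix (Fin n) (Fin n) k) (f : MvPolynomial (Fin n) k) :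
    linSub A (linSub B f) = linSub (B * A) f := by
  rw [linSub, linSub, linSub, bind₁_bind₁]
  have hfun : (fun i => (bind₁ fun i => ∑ j, C (A i j) * X j) (∑ j, C (B i j) * X j))
      = fun i => ∑ j, C ((B * A) i j) * X j := by
    funext i
    rw [map_sum]
    simp only [map_mul, bind₁_X_right, bind₁_C_right, Finset.mul_sum]
    rw [Finset.sum_comm]
    refine Finset.sum_congr rfl fun l _ => ?_
    rw [Matrix.mul_apply, map_sum (C : k →+* MvPolynomial (Fin n) k), Finset.sum_mul]
    refine Finset.sum_congr rfl fun j _ => ?_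
    rw [C_mul, mul_assoc]
  rw [hfun]

lemma linSub_one (f : MvPolynomial (Fin n) k) : linSub 1 f = f := by
  rw [linSub]
  have h : (fun i : Fin n => ∑ j, C ((1 : Matrix (Fin n) (Fin n) k) i j) * X j) = X := by
    funext i
    rw [Finset.sum_eq_single i]
    · rw [Matrix.one_apply_eq, map_one, one_mul]
    · intro j _ hj
      rw [Matrix.one_apply, if_neg (Ne.symm hj), map_zero, zero_mul]
    · intro h; exact absurd (Finset.mem_univ i) h
  rw [h]
  rw [show (bind₁ X) f = (AlgHom.id k (MvPolynomial (Fin n) k)) f from by rw [bind₁_X_left]]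
  rfl

lemma isHomogeneous_linSub (A : Matrix (Fin n) (Fin n) k) {f : MvPolynomial (Fin n) k} {d : ℕ}
    (hf : f.IsHomogeneous d) : (linSub A f).IsHomogeneous d := by
  rw [← support_sum_monomial_coeff f, map_sum]
  refine IsHomogeneous.sum _ _ _ fun a ha => ?_
  have hdeg : a.degree = d := by
    by_contra hne
    exact (mem_support_iff.mp ha) (hf.coeff_eq_zero hne)
  rw [monomial_eq, map_mul]
  have h1 : (linSub A (C (coeff a f))).IsHomogeneous 0 := by
    rw [show linSub A (C (coeff a f)) = C (coeff a f) from bind₁_C_right _ _]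
    exact isHomogeneous_C _ _
  have h2 : (linSub A (a.prod fun i e => X i ^ e)).IsHomogeneous a.degree := by
    rw [Finsupp.prod, map_prod]
    have key := IsHomogeneous.prod a.support (fun i => linSub A (X i ^ (a i))) (fun i => a i)
      (fun i _ => by
        show (linSub A (X i ^ a i)).IsHomogeneous (a i)
        rw [map_pow]
        have hX : (linSub A (X i)).IsHomogeneous 1 := by
          rw [linSub, bind₁_X_right]
          refine IsHomogeneous.sum _ _ _ fun j _ => ?_
          simpa using (isHomogeneous_C (Fin n) (A i j)).mul (isHomogeneous_X k j)
        simpa using hX.pow (a i))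
    exact key
  simpa [hdeg] using h1.mul h2

lemma linSub_mem_pow_pointIdeal (A : Matrix (Fin n) (Fin n) k) {q q' : Fin n → k}
    (hA : A.mulVec q' = q) {e : ℕ} {f : MvPolynomial (Fin n) k} (hf : f ∈ pointIdeal q ^ e) :
    linSub A f ∈ pointIdeal q' ^ e := by
  have hmap : Ideal.map (linSub A) (pointIdeal q) ≤ pointIdeal q' := by
    rw [pointIdeal, Ideal.map_span, Ideal.span_le]
    rintro g ⟨g₀, ⟨⟨d, hd⟩, hev⟩, rfl⟩
    exact Ideal.subset_span ⟨⟨d, isHomogeneous_linSub A hd⟩, by rw [eval_linSub, hA, hev]⟩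
  have h1 : linSub A f ∈ Ideal.map (linSub A) (pointIdeal q ^ e) := Ideal.mem_map_of_mem _ hf
  rw [Ideal.map_pow] at h1
  exact Ideal.pow_right_mono hmap e h1

/-- evaluation of a homogeneous polynomial at a coordinate point -/
lemma eval_estd {f : MvPolynomial (Fin n) k} {d : ℕ} (hf : f.IsHomogeneous d) (j : Fin n) :
    eval (Pi.single j 1 : Fin n → k) f = coeff (Finsupp.single j d) f := by
  rw [eval_eq]
  rw [Finset.sum_eq_single (Finsupp.single j d)]
  · rw [Finset.prod_eq_one, mul_one]
    intro i hi
    have : i = j := Finset.mem_singleton.mp (Finsupp.support_single_subset hi)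
    rw [this, Pi.single_eq_same, one_pow]
  · intro b hb hbne
    have hex : ∃ i, i ≠ j ∧ b i ≠ 0 := by
      by_contra hco
      push_neg at hco
      have hsub : b.support ⊆ {j} := by
        intro i hi
        rcases eq_or_ne i j with h | h
        · simp [h]
        · exact absurd (hco i h) (Finsupp.mem_support_iff.mp hi)
      have hbeq := Finsupp.support_subset_singleton.mp hsub
      have hdeg : b.degree = d := by
        by_contra hne
        exact (mem_support_iff.mp hb) (hf.coeff_eq_zero hne)
      rw [hbeq] at hdeg
      rw [Finsupp.degree_single'] at hdeg
      exact hbne (by rw [hbeq, hdeg])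
    obtain ⟨i, hij, hbi⟩ := hex
    rw [Finset.prod_eq_zero (Finsupp.mem_support_iff.mpr hbi), mul_zero]
    rw [Pi.single_eq_of_ne hij, zero_pow hbi]
  · intro h
    rw [notMem_support_iff.mp h, zero_mul]

/-- The monomial ideal containing the point ideal of a coordinate point. -/
noncomputable def Pj (j : Fin n) : Ideal (MvPolynomial (Fin n) k) :=
  Ideal.span ((fun i => (X i : MvPolynomial (Fin n) k)) '' {i | i ≠ j})

lemma pointIdeal_estd_le (j : Fin n) :
    pointIdeal (Pi.single j 1 : Fin n → k) ≤ Pj j := by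
  rw [pointIdeal, Ideal.span_le]
  rintro f ⟨⟨d, hd⟩, hev⟩
  rw [eval_estd hd] at hev
  show f ∈ Pj j
  rw [← support_sum_monomial_coeff f]
  refine Ideal.sum_mem _ fun a ha => ?_
  have hex : ∃ i, i ≠ j ∧ a i ≠ 0 := by
    by_contra hco
    push_neg at hco
    have hsub : a.support ⊆ {j} := by
      intro i hi
      rcases eq_or_ne i j with h | h
      · simp [h]
      · exact absurd (hco i h) (Finsupp.mem_support_iff.mp hi)
    have haeq := Finsupp.support_subset_singleton.mp hsub
    have hdeg : a.degree = d := by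
      by_contra hne
      exact (mem_support_iff.mp ha) (hd.coeff_eq_zero hne)
    rw [haeq] at hdeg
    rw [Finsupp.degree_single'] at hdeg
    have : a = Finsupp.single j d := by rw [haeq, hdeg]
    rw [this] at ha
    exact (mem_support_iff.mp ha) hev
  obtain ⟨i, hij, hai⟩ := hex
  have hXi : (X i : MvPolynomial (Fin n) k) = monomial (Finsupp.single i 1) 1 := rfl
  have hfactor : monomial a (coeff a f)
      = monomial (a - Finsupp.single i 1) (coeff a f) * X i := by
    rw [hXi, monomial_mul, mul_one,
      tsub_add_cancel_of_le (Finsupp.single_le_iff.mpr (Nat.one_le_iff_ne_zero.mpr hai))]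
  rw [hfactor]
  exact Ideal.mul_mem_left _ _ (Ideal.subset_span ⟨i, hij, rfl⟩)

lemma weight_base (j : Fin n) {f : MvPolynomial (Fin n) k} (hf : f ∈ Pj j) :
    ∀ a ∈ f.support, 1 ≤ ∑ i ∈ Finset.univ.erase j, a i := by
  refine Submodule.span_induction
    (p := fun x _ => ∀ a ∈ x.support, 1 ≤ ∑ i ∈ Finset.univ.erase j, a i)
    ?_ ?_ ?_ ?_ hf
  · rintro g ⟨i, hij, rfl⟩ a ha
    rw [support_X, Finset.mem_singleton] at ha
    subst ha
    calc 1 = Finsupp.single i 1 i := (Finsupp.single_eq_same).symm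
      _ ≤ ∑ l ∈ Finset.univ.erase j, Finsupp.single i 1 l :=
        Finset.single_le_sum (fun _ _ => Nat.zero_le _)
          (Finset.mem_erase.mpr ⟨hij, Finset.mem_univ i⟩)
  · simp
  · intro x y _ _ ihx ihy a ha
    rcases Finset.mem_union.mp (support_add ha) with h | h
    exacts [ihx a h, ihy a h]
  · intro c x _ ih a ha
    rw [smul_eq_mul] at ha
    obtain ⟨b, _, cc, hcc, rfl⟩ := Finset.mem_add.mp (support_mul _ _ ha)
    calc 1 ≤ ∑ i ∈ Finset.univ.erase j, cc i := ih cc hcc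
      _ ≤ ∑ i ∈ Finset.univ.erase j, (b + cc) i :=
        Finset.sum_le_sum fun i _ => by rw [Finsupp.add_apply]; omega

lemma weight_pow (j : Fin n) (e : ℕ) {f : MvPolynomial (Fin n) k}
    (hf : f ∈ (Pj j : Ideal (MvPolynomial (Fin n) k)) ^ e) :
    ∀ a ∈ f.support, e ≤ ∑ i ∈ Finset.univ.erase j, a i := by
  induction e generalizing f with
  | zero => intro a _; exact Nat.zero_le _
  | succ e ih =>
    rw [pow_succ] at hf
    refine Submodule.mul_induction_on hf ?_ ?_
    · intro g hg h hh a ha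
      obtain ⟨b, hb, c, hc, rfl⟩ := Finset.mem_add.mp (support_mul _ _ ha)
      have h1 := ih hg b hb
      have h2 := weight_base j hh c hc
      have h3 : ∑ i ∈ Finset.univ.erase j, (b + c) i
          = (∑ i ∈ Finset.univ.erase j, b i) + ∑ i ∈ Finset.univ.erase j, c i := by
        simp only [Finsupp.add_apply]
        exact Finset.sum_add_distrib
      omega
    · intro x y hx hy a ha
      rcases Finset.mem_union.mp (support_add ha) with h | h
      exacts [hx a h, hy a h]

end Aux

section Main

variable {k : Type*} [Field k]

lemma alpha_lower (p : Fin 4 → (Fin 4 → k)) (hdet : IsUnit (Matrix.of p).det) (m : ℕ) :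
    4 * m ≤ alpha (fatIdeal (N := 3) p (fun _ => 3 * m)) := by
  set A : Matrix (Fin 4) (Fin 4) k := (Matrix.of p).transpose with hAdef
  have hA : IsUnit A.det := by rw [hAdef, Matrix.det_transpose]; exact hdet
  have hAe : ∀ j, A.mulVec (Pi.single j 1) = p j := by
    intro j
    rw [Matrix.mulVec_single]
    funext i
    simp [hAdef]
  have hBe : ∀ j, A⁻¹.mulVec (p j) = Pi.single j 1 := by
    intro j
    rw [← hAe j, Matrix.mulVec_mulVec, Matrix.nonsing_inv_mul A hA, Matrix.one_mulVec]
  have hcomp2 : ∀ f, linSub A (linSub A⁻¹ f) = f := by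
    intro f
    rw [linSub_linSub, Matrix.nonsing_inv_mul A hA, linSub_one]
  have hcomp1 : ∀ f, linSub A⁻¹ (linSub A f) = f := by
    intro f
    rw [linSub_linSub, Matrix.mul_nonsing_inv A hA, linSub_one]
  -- the nonzero homogeneous witness
  set σ0 : Fin 4 → Fin 4 := fun j => if j = 0 then 1 else 0 with hσ0def
  have hσ0 : ∀ j, σ0 j ≠ j := by decide
  set g0 : MvPolynomial (Fin 4) k := ∏ j : Fin 4, X (σ0 j) ^ (3 * m) with hg0def
  have hg0ne : g0 ≠ 0 :=
    Finset.prod_ne_zero_iff.mpr fun j _ => pow_ne_zero _ (X_ne_zero _)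
  have hg0hom : g0.IsHomogeneous (12 * m) := by
    have key := IsHomogeneous.prod Finset.univ (fun j : Fin 4 => X (σ0 j) ^ (3 * m))
      (fun _ => 3 * m) (fun j _ => by simpa using (isHomogeneous_X k (σ0 j)).pow (3 * m))
    have hsum : (∑ _j : Fin 4, 3 * m) = 12 * m := by
      simp [Finset.sum_const]
      ring
    rw [hsum] at key
    exact key
  have hg0mem : ∀ j, g0 ∈ pointIdeal (Pi.single j 1 : Fin 4 → k) ^ (3 * m) := by
    intro j
    have hXmem : (X (σ0 j) : MvPolynomial (Fin 4) k) ∈ pointIdeal (Pi.single j 1 : Fin 4 → k) :=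
      Ideal.subset_span ⟨⟨1, isHomogeneous_X _ _⟩, by
        rw [eval_X]; exact Pi.single_eq_of_ne (hσ0 j) 1⟩
    rw [hg0def, ← Finset.mul_prod_erase Finset.univ _ (Finset.mem_univ j)]
    exact Ideal.mul_mem_right _ _ (Ideal.pow_mem_pow hXmem (3 * m))
  set f0 : MvPolynomial (Fin 4) k := linSub A⁻¹ g0 with hf0def
  have hf0mem : f0 ∈ fatIdeal (N := 3) p (fun _ => 3 * m) := by
    rw [fatIdeal]
    refine Ideal.mem_iInf.mpr fun j => ?_
    exact linSub_mem_pow_pointIdeal A⁻¹ (hBe j) (hg0mem j)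
  have hf0ne : f0 ≠ 0 := by
    intro h
    apply hg0ne
    rw [← hcomp2 g0, ← hf0def, h, map_zero]
  have hf0hom : f0.IsHomogeneous (12 * m) := isHomogeneous_linSub _ hg0hom
  -- lower bound for sInf
  have hnonempty : { t | ∃ f ∈ fatIdeal (N := 3) p (fun _ => 3 * m),
      f ≠ 0 ∧ f.IsHomogeneous t }.Nonempty := ⟨12 * m, f0, hf0mem, hf0ne, hf0hom⟩
  rw [alpha]
  obtain ⟨f, hfI, hfne, hfhom⟩ := Nat.sInf_mem hnonempty
  set t0 := sInf { t | ∃ f ∈ fatIdeal (N := 3) p (fun _ => 3 * m),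
      f ≠ 0 ∧ f.IsHomogeneous t } with ht0
  set g : MvPolynomial (Fin 4) k := linSub A f with hgdef
  have hgne : g ≠ 0 := by
    intro h
    apply hfne
    rw [← hcomp1 f, ← hgdef, h, map_zero]
  have hghom : g.IsHomogeneous t0 := isHomogeneous_linSub _ hfhom
  have hgmem : ∀ j, g ∈ (Pj j : Ideal (MvPolynomial (Fin 4) k)) ^ (3 * m) := by
    intro j
    have h1 : f ∈ pointIdeal (p j) ^ (3 * m) := by
      rw [fatIdeal] at hfI
      exact Ideal.mem_iInf.mp hfI j
    exact Ideal.pow_right_mono (pointIdeal_estd_le j) (3 * m)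
      (linSub_mem_pow_pointIdeal A (hAe j) h1)
  obtain ⟨a, ha⟩ := Finset.nonempty_iff_ne_empty.mpr (fun h => hgne (support_eq_empty.mp h))
  have hwt : ∀ j, 3 * m ≤ ∑ i ∈ Finset.univ.erase j, a i :=
    fun j => weight_pow j (3 * m) (hgmem j) a ha
  have hdeg : a.degree = t0 := by
    by_contra hne
    exact (mem_support_iff.mp ha) (hghom.coeff_eq_zero hne)
  have hsum : ∑ i, a i = t0 := by
    rw [← hdeg]
    have hdd : a.degree = ∑ i ∈ a.support, a i := rfl
    rw [hdd]
    exact (Finset.sum_subset (Finset.subset_univ _)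
      fun i _ hi => Finsupp.notMem_support_iff.mp hi).symm
  have hj : ∀ j : Fin 4, (∑ i ∈ Finset.univ.erase j, a i) + a j = t0 := by
    intro j
    rw [Finset.sum_erase_add _ _ (Finset.mem_univ j), hsum]
  have hsum4 : a 0 + a 1 + a 2 + a 3 = t0 := by
    rw [← hsum, Fin.sum_univ_four]
  have k0 := hwt 0; have e0 := hj 0
  have k1 := hwt 1; have e1 := hj 1
  have k2 := hwt 2; have e2 := hj 2
  have k3 := hwt 3; have e3 := hj 3
  omega

end Main

/-- For `4` points in general position in `ℙ³`, the radical ideal `I = I(1^{×4})`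
satisfies `γ(I) ≥ 4/3`; in fact `α(I^(3m)) ≥ 4m` for all `m ≥ 1`. -/
theorem statement10 (k : Type*) [Field k] [CharZero k] :
    Generic k 3 4 (fun p =>
      (∀ γ : ℝ, Tendsto (alphaSeq p (fun _ => 1)) atTop (nhds γ) → 4 / 3 ≤ γ) ∧
      ∀ m : ℕ, 1 ≤ m → 4 * m ≤ alpha (fatIdeal p (fun _ => 3 * m))) := by
  classical
  set detPoly : MvPolynomial (Fin 4 × Fin 4) k :=
    (Matrix.of fun j i => (X (j, i) : MvPolynomial (Fin 4 × Fin 4) k)).det with hdp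
  have hdeteval : ∀ p : Fin 4 → (Fin 4 → k),
      eval (fun q : Fin 4 × Fin 4 => p q.1 q.2) detPoly = (Matrix.of p).det := by
    intro p
    rw [hdp, RingHom.map_det]
    congr 1
    ext j i
    simp
  set p₀ : Fin 4 → Fin 4 → k := fun j => Pi.single j 1 with hp₀
  refine ⟨{detPoly}, ⟨p₀, ?_, detPoly, rfl, ?_⟩, ?_⟩
  · intro j h
    have h2 := congrFun h j
    rw [hp₀] at h2
    simp at h2
  · rw [hdeteval p₀]
    have : Matrix.of p₀ = 1 := by
      ext j i
      rw [Matrix.one_apply, Matrix.of_apply, hp₀]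
      have hps : (fun j : Fin 4 => (Pi.single j 1 : Fin 4 → k)) j i
          = if i = j then (1 : k) else 0 := Pi.single_apply j 1 i
      rw [hps]
      exact if_congr ⟨fun h => h.symm, fun h => h.symm⟩ rfl rfl
    rw [this, Matrix.det_one]
    exact one_ne_zero
  · rintro p _ ⟨f, hfS, hf⟩
    rw [Set.mem_singleton_iff] at hfS
    subst hfS
    rw [hdeteval] at hf
    have hdet : IsUnit (Matrix.of p).det := isUnit_iff_ne_zero.mpr hf
    have hmain : ∀ m : ℕ, 4 * m ≤ alpha (fatIdeal (N := 3) p (fun _ => 3 * m)) :=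
      alpha_lower p hdet
    refine ⟨?_, fun m _ => hmain m⟩
    intro γ hγ
    have h3 : Tendsto (fun m : ℕ => 3 * m) atTop atTop :=
      Filter.tendsto_atTop_atTop.mpr fun b => ⟨b, fun a ha => by omega⟩
    have hcomp := hγ.comp h3
    refine ge_of_tendsto hcomp ?_
    filter_upwards [eventually_ge_atTop 1] with m hm
    show 4 / 3 ≤ alphaSeq p (fun _ => 1) (3 * m)
    rw [alphaSeq]
    have hfun : (fun j : Fin 4 => (3 * m) * 1) = (fun _ : Fin 4 => 3 * m) := by
      funext j; rw [mul_one]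
    rw [hfun]
    have hb := hmain m
    have hpos : (0 : ℝ) < ((3 * m : ℕ) : ℝ) := by
      have : 0 < 3 * m := by omega
      exact_mod_cast this
    rw [div_le_div_iff₀ (by norm_num) hpos]
    have hb' : ((4 * m : ℕ) : ℝ) ≤ (alpha (fatIdeal (N := 3) p (fun _ => 3 * m)) : ℝ) := by
      exact_mod_cast hb
    push_cast at hb' ⊢
    linarith
end
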